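/- arXiv:2106.12249 — 10 statements merged into one kernel-verified Lean document; each statement's English description precedes it below -/
import Mathlib

section
/- If G is an A-Stick graph and c ≺° d holds for vertices c, d of G (where ≺° is the relation generated by the rules (O),(A),(TB),(FB),(T)), then (c, d) is a forced pair: c precedes d in every A-Stick order of G. -/
open Sum

/-- The relation `≺°` generated by the rules (O), (A), (TB), (FB), (T). -/
inductive Prec (n : ℕ) (β : Type) (E : Fin n → β → Prop) (k : β → Fin n) :
    (Fin n ⊕ β) → (Fin n ⊕ β) → Prop
  | O : ∀ {i j : Fin n}, i < j → Prec n β E k (inl i) (inl j)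
  | A : ∀ {t : Fin n} {j : β}, E t j → Prec n β E k (inl t) (inr j)
  | TB : ∀ {s t : Fin n} {h j : β}, s < t → t < k j → E s j → ¬ E t j → E t h →
      Prec n β E k (inr h) (inr j)
  | FB : ∀ {t : Fin n} {w h j : β}, Prec n β E k (inr w) (inr j) → k j < t → E t w →
      E t h → Prec n β E k (inr h) (inr j)
  | T : ∀ {p q r : Fin n ⊕ β}, Prec n β E k p q → Prec n β E k q r → Prec n β E k p r
/-- A Stick order for `G = (A ∪ B, E)`: a linear (strict total) order on `A ∪ B` such that
every `A`-endpoint of an edge precedes its `B`-endpoint, and there is no forbidden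
configuration `a' ≺ a ≺ b ≺ b'` with `a'b ∈ E`, `ab' ∈ E`, `ab ∉ E`. -/
def IsStickOrder (n : ℕ) (β : Type) (E : Fin n → β → Prop)
    (r : (Fin n ⊕ β) → (Fin n ⊕ β) → Prop) : Prop :=
  IsStrictTotalOrder (Fin n ⊕ β) r ∧
  (∀ (a : Fin n) (b : β), E a b → r (inl a) (inr b)) ∧
  ¬ ∃ (a a' : Fin n) (b b' : β),
      r (inl a') (inl a) ∧ r (inl a) (inr b) ∧ r (inr b) (inr b') ∧
      E a' b ∧ E a b' ∧ ¬ E a b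

/-- An A-Stick order: a Stick order whose restriction to `A` is the given order. -/
def IsAStickOrder (n : ℕ) (β : Type) (E : Fin n → β → Prop)
    (r : (Fin n ⊕ β) → (Fin n ⊕ β) → Prop) : Prop :=
  IsStickOrder n β E r ∧ ∀ i j : Fin n, r (inl i) (inl j) ↔ i < j

/-- If `G` is an A-Stick graph and `c ≺° d`, then `(c, d)` is a forced pair:
`c` precedes `d` in every A-Stick order of `G`. -/
theorem stmt0 (n : ℕ) (β : Type) [Fintype β] (E : Fin n → β → Prop) (k : β → Fin n)
    (hk : ∀ j : β, E (k j) j ∧ ∀ i : Fin n, E i j → i ≤ k j)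
    (hA : ∃ r, IsAStickOrder n β E r)
    (c d : Fin n ⊕ β) (hcd : Prec n β E k c d) :
    ∀ r, IsAStickOrder n β E r → r c d := by
  intro r hr
  obtain ⟨⟨hsto, hedge, hforb⟩, hresA⟩ := hr
  have htri : ∀ a b, r a b ∨ a = b ∨ r b a := fun a b => by
    by_cases h1 : r a b
    · exact Or.inl h1
    by_cases h2 : r b a
    · exact Or.inr (Or.inr h2)
    exact Or.inr (Or.inl (hsto.trichotomous a b h1 h2))
  have htrans : ∀ {x y z}, r x y → r y z → r x z := fun hx hy => hsto.trans _ _ _ hx hy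
  induction hcd with
  | O hij => exact (hresA _ _).2 hij
  | A hE => exact hedge _ _ hE
  | @TB s t h j hst htk hsj htj hth =>
    rcases htri (inr h) (inr j) with h1 | h2 | h3
    · exact h1
    · exact absurd (inr_injective h2 ▸ hth) htj
    · exact absurd ⟨t, s, j, h, (hresA _ _).2 hst,
        htrans ((hresA _ _).2 htk) (hedge _ _ (hk j).1), h3, hsj, hth, htj⟩ hforb
  | @FB t w h j hwj hkt htw hth ih =>
    have hwj' := ih
    have htj : ¬ E t j := fun hE => absurd ((hk j).2 t hE) (not_le.2 hkt)
    rcases htri (inr h) (inr j) with h1 | h2 | h3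
    · exact h1
    · exact absurd (inr_injective h2 ▸ hth) htj
    · exact absurd ⟨t, k j, j, h, (hresA _ _).2 hkt,
        htrans (hedge _ _ htw) hwj', h3, (hk j).1, hth, htj⟩ hforb
  | T _ _ ih1 ih2 => exact htrans ih1 ih2
end

section
/- For a_t ∈ A and b_j ∈ B, the relation a_t ≺° b_j holds if and only if: (a) a_t b_j ∈ E; or (b) there exists b_q ∈ B with a_t b_q ∈ E and b_q ≺° b_j; or (c) there exists r > t with a_r ≺° b_j. -/
open Sum

lemma prec_inl {n : ℕ} {β : Type} {E : Fin n → β → Prop} {k : β → Fin n}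
    {p q : Fin n ⊕ β} (h : Prec n β E k p q) :
    ∀ r : Fin n, q = inl r → ∃ i : Fin n, p = inl i ∧ i < r := by
  induction h with
  | @O i _ hij => exact fun r hr => ⟨i, rfl, by cases hr; exact hij⟩
  | A _ => exact fun r hr => by simp at hr
  | TB _ _ _ _ _ => exact fun r hr => by simp at hr
  | FB _ _ _ _ => exact fun r hr => by simp at hr
  | T h1 h2 ih1 ih2 =>
    intro r hr
    obtain ⟨s, rfl, hs⟩ := ih2 r hr
    obtain ⟨i, hp, hi⟩ := ih1 s rfl
    exact ⟨i, hp, hi.trans hs⟩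

lemma prec_main {n : ℕ} {β : Type} {E : Fin n → β → Prop} {k : β → Fin n}
    {p q : Fin n ⊕ β} (h : Prec n β E k p q) :
    ∀ (t : Fin n) (j : β), p = inl t → q = inr j →
      E t j ∨
      (∃ q' : β, E t q' ∧ Prec n β E k (inr q') (inr j)) ∨
      (∃ r : Fin n, t < r ∧ Prec n β E k (inl r) (inr j)) := by
  induction h with
  | O _ => exact fun t j hp hq => by simp at hq
  | A hE => intro t j hp hq; cases hp; cases hq; exact Or.inl hE
  | TB _ _ _ _ _ => exact fun t j hp hq => by simp at hp
  | FB _ _ _ _ => exact fun t j hp hq => by simp at hp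
  | @T _ m _ h1 h2 ih1 ih2 =>
    intro t j hp hq
    subst hp; subst hq
    cases m with
    | inl r =>
      obtain ⟨i, hi, hir⟩ := prec_inl h1 r rfl
      cases hi
      exact Or.inr (Or.inr ⟨r, hir, h2⟩)
    | inr b =>
      rcases ih1 t b rfl rfl with hE | ⟨q', hE, hq'⟩ | ⟨r, htr, hr⟩
      · exact Or.inr (Or.inl ⟨b, hE, h2⟩)
      · exact Or.inr (Or.inl ⟨q', hE, hq'.T h2⟩)
      · exact Or.inr (Or.inr ⟨r, htr, hr.T h2⟩)

/-- For `a_t ∈ A` and `b_j ∈ B`, `a_t ≺° b_j` holds iff (a) `a_t b_j ∈ E`,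
or (b) `a_t b_q ∈ E` for some `b_q` with `b_q ≺° b_j`, or (c) `a_r ≺° b_j` for some `r > t`. -/
theorem stmt2 (n : ℕ) (β : Type) [Fintype β] (E : Fin n → β → Prop) (k : β → Fin n)
    (hk : ∀ j : β, E (k j) j ∧ ∀ i : Fin n, E i j → i ≤ k j)
    (t : Fin n) (j : β) :
    Prec n β E k (inl t) (inr j) ↔
      E t j ∨
      (∃ q : β, E t q ∧ Prec n β E k (inr q) (inr j)) ∨
      (∃ r : Fin n, t < r ∧ Prec n β E k (inl r) (inr j)) := by
  constructor
  · exact fun h => prec_main h t j rfl rfl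
  · rintro (hE | ⟨q, hE, hq⟩ | ⟨r, htr, hr⟩)
    · exact Prec.A hE
    · exact (Prec.A hE).T hq
    · exact (Prec.O htr).T hr
end

section
/- For b_h, b_j ∈ B, the relation b_h ≺° b_j holds if and only if one of the following holds: (1) b_h is a basis of b_j; (2) b_h is a j-descendant of a basis of b_j; (3) there exists b_q ∈ B with b_q ≺° b_j such that b_h is a basis of b_q; (4) there exists b_q ∈ B with b_q ≺° b_j such that b_h is a q-descendant of a basis of b_q. -/
open Sum

/-- `b_h` is a basis of `b_j`: there are `s < t < k_j` with `a_s b_j ∈ E`, `a_t b_j ∉ E`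
and `a_t b_h ∈ E`. -/
def IsBasis (n : ℕ) (β : Type) (E : Fin n → β → Prop) (k : β → Fin n) (h j : β) : Prop :=
  ∃ s t : Fin n, s < t ∧ t < k j ∧ E s j ∧ ¬ E t j ∧ E t h

/-- `b_h` is a `j`-descendant of `b_w`: a chain `b_w = b_{u_1}, …, b_{u_g} = b_h` (g ≥ 2)
where consecutive elements have a common neighbor `a_t` with `t > k_j`. -/
def IsDescendant (n : ℕ) (β : Type) (E : Fin n → β → Prop) (k : β → Fin n)
    (j w h : β) : Prop :=
  Relation.TransGen (fun w' h' => ∃ t : Fin n, k j < t ∧ E t w' ∧ E t h') w h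

/-- Fuel-indexed "basis chain": `CB N h q` means `h` is reachable from a basis of `q`
by a (possibly empty) chain of `q`-steps; `N` records the size of the certificate. -/
inductive CB (n : ℕ) (β : Type) (E : Fin n → β → Prop) (k : β → Fin n) :
    ℕ → β → β → Prop
  | base {v q : β} : IsBasis n β E k v q → CB n β E k 1 v q
  | step {N : ℕ} {w h q : β} {t : Fin n} :
      CB n β E k N w q → k q < t → E t w → E t h → CB n β E k (N + 1) h q

/-- Fuel-indexed transitive composition of basis chains. -/
inductive XC (n : ℕ) (β : Type) (E : Fin n → β → Prop) (k : β → Fin n) :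
    ℕ → β → β → Prop
  | base {N : ℕ} {h j : β} : CB n β E k N h j → XC n β E k N h j
  | comp {N M : ℕ} {q h j : β} :
      XC n β E k N q j → CB n β E k M h q → XC n β E k (N + M) h j

namespace Stmt3Aux

variable {n : ℕ} {β : Type} {E : Fin n → β → Prop} {k : β → Fin n}

lemma CB_pos {N : ℕ} {h q : β} (hcb : CB n β E k N h q) : 0 < N := by
  cases hcb <;> omega

lemma basis_prec {h j : β} (hb : IsBasis n β E k h j) :
    Prec n β E k (inr h) (inr j) := by
  obtain ⟨s, t, h1, h2, h3, h4, h5⟩ := hb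
  exact Prec.TB h1 h2 h3 h4 h5

lemma desc_prec {v h j : β} (hv : Prec n β E k (inr v) (inr j))
    (hd : IsDescendant n β E k j v h) : Prec n β E k (inr h) (inr j) := by
  induction hd with
  | single hstep =>
    obtain ⟨t, ht, h1, h2⟩ := hstep
    exact Prec.FB hv ht h1 h2
  | tail _ hstep ih =>
    obtain ⟨t, ht, h1, h2⟩ := hstep
    exact Prec.FB ih ht h1 h2

lemma cb_prec {N : ℕ} {h q : β} (hcb : CB n β E k N h q) :
    Prec n β E k (inr h) (inr q) := by
  induction hcb with
  | base hb => exact basis_prec hb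
  | step _ ht hEtw hEth ih => exact Prec.FB ih ht hEtw hEth

lemma xc_prec {N : ℕ} {h j : β} (hxc : XC n β E k N h j) :
    Prec n β E k (inr h) (inr j) := by
  induction hxc with
  | base hcb => exact cb_prec hcb
  | comp _ hcb ih => exact Prec.T (cb_prec hcb) ih

lemma cb_char {N : ℕ} {h q : β} (hcb : CB n β E k N h q) :
    ∃ v : β, IsBasis n β E k v q ∧ (v = h ∨ IsDescendant n β E k q v h) := by
  induction hcb with
  | base hb => exact ⟨_, hb, Or.inl rfl⟩
  | step _ ht hEtw hEth ih =>
    obtain ⟨v, hb, hvh⟩ := ih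
    rcases hvh with rfl | hd
    · exact ⟨v, hb, Or.inr (Relation.TransGen.single ⟨_, ht, hEtw, hEth⟩)⟩
    · exact ⟨v, hb, Or.inr (Relation.TransGen.tail hd ⟨_, ht, hEtw, hEth⟩)⟩

lemma xc_trans {N₁ : ℕ} {a b : β} (h1 : XC n β E k N₁ a b) :
    ∀ {N₂ : ℕ} {c : β}, XC n β E k N₂ b c → ∃ M, XC n β E k M a c := by
  induction h1 with
  | base hcb => exact fun h2 => ⟨_, XC.comp h2 hcb⟩
  | comp _ hcb ih =>
    intro N₂ c h2
    obtain ⟨M, hM⟩ := ih h2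
    exact ⟨_, XC.comp hM hcb⟩

/-- The main mutual induction: (KEY) `XC` is closed under `j`-steps, (LEM) if all neighbors
of `q` exceed `t > k j` and `t < k q` with `q` in `X_j`, then any `h` with `E t h` is in
`X_j`. -/
lemma key (hk : ∀ j : β, E (k j) j ∧ ∀ i : Fin n, E i j → i ≤ k j) :
    ∀ N : ℕ,
      (∀ (w j h : β) (t : Fin n), XC n β E k N w j → k j < t → E t w → E t h →
        ∃ M, XC n β E k M h j) ∧
      (∀ (q j h : β) (t : Fin n), XC n β E k N q j → k j < t → t < k q →
        (∀ s : Fin n, E s q → t < s) → E t h → ∃ M, XC n β E k M h j) := by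
  intro N
  induction N using Nat.strong_induction_on with
  | _ N IH =>
    constructor
    · rintro w j h t hxc htkj hEtw hEth
      cases hxc with
      | base hcb => exact ⟨_, XC.base (CB.step hcb htkj hEtw hEth)⟩
      | @comp N₁ N₂ q _ _ hq hcb =>
        have hN₁ : N₁ < N₁ + N₂ := by have := CB_pos hcb; omega
        rcases lt_trichotomy (k q) t with h1 | h1 | h1
        · exact ⟨_, XC.comp hq (CB.step hcb h1 hEtw hEth)⟩
        · have hEtq : E t q := h1 ▸ (hk q).1
          exact (IH N₁ hN₁).1 q j h t hq htkj hEtq hEth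
        · by_cases hEtq : E t q
          · exact (IH N₁ hN₁).1 q j h t hq htkj hEtq hEth
          · by_cases hsm : ∃ s : Fin n, s < t ∧ E s q
            · obtain ⟨s, hs, hEs⟩ := hsm
              exact ⟨_, XC.comp hq (CB.base ⟨s, t, hs, h1, hEs, hEtq, hEth⟩)⟩
            · refine (IH N₁ hN₁).2 q j h t hq htkj h1 ?_ hEth
              intro s hEs
              rcases lt_trichotomy s t with h2 | h2 | h2
              · exact absurd ⟨s, h2, hEs⟩ hsm
              · exact absurd (h2 ▸ hEs) hEtq
              · exact h2
    · rintro q j h t hxc htkj htkq hnbr hEth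
      cases hxc with
      | base hcb =>
        cases hcb with
        | base hb =>
          obtain ⟨s, τ, h1, h2, h3, h4, h5⟩ := hb
          exact absurd (((hnbr τ h5).trans h2).trans htkj) (lt_irrefl t)
        | @step N' w' _ _ r hcb' hr hErw' hErq =>
          have htr : t < r := hnbr r hErq
          have htkw' : t < k w' := htr.trans_le ((hk w').2 r hErw')
          by_cases hEtw' : E t w'
          · exact (IH N' (by omega)).1 w' j h t (XC.base hcb') htkj hEtw' hEth
          · by_cases hsm : ∃ s : Fin n, s < t ∧ E s w'
            · obtain ⟨s, hs, hEs⟩ := hsm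
              exact ⟨_, XC.comp (XC.base hcb')
                (CB.base ⟨s, t, hs, htkw', hEs, hEtw', hEth⟩)⟩
            · refine (IH N' (by omega)).2 w' j h t (XC.base hcb') htkj htkw' ?_ hEth
              intro s hEs
              rcases lt_trichotomy s t with h2 | h2 | h2
              · exact absurd ⟨s, h2, hEs⟩ hsm
              · exact absurd (h2 ▸ hEs) hEtw'
              · exact h2
      | @comp N₁ N₂ q₂ _ _ hq2 hcb =>
        cases hcb with
        | base hb =>
          obtain ⟨s₂, τ₂, g1, g2, g3, g4, g5⟩ := hb
          have htk2 : t < k q₂ := (hnbr τ₂ g5).trans g2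
          by_cases hEtq₂ : E t q₂
          · exact (IH N₁ (by omega)).1 q₂ j h t hq2 htkj hEtq₂ hEth
          · by_cases hsm : ∃ s : Fin n, s < t ∧ E s q₂
            · obtain ⟨s, hs, hEs⟩ := hsm
              exact ⟨_, XC.comp hq2 (CB.base ⟨s, t, hs, htk2, hEs, hEtq₂, hEth⟩)⟩
            · refine (IH N₁ (by omega)).2 q₂ j h t hq2 htkj htk2 ?_ hEth
              intro s hEs
              rcases lt_trichotomy s t with h2 | h2 | h2
              · exact absurd ⟨s, h2, hEs⟩ hsm
              · exact absurd (h2 ▸ hEs) hEtq₂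
              · exact h2
        | @step N₂' w' _ _ r hcb' hr hErw' hErq =>
          have htr : t < r := hnbr r hErq
          have htkw' : t < k w' := htr.trans_le ((hk w').2 r hErw')
          have hw'X : XC n β E k (N₁ + N₂') w' j := XC.comp hq2 hcb'
          by_cases hEtw' : E t w'
          · exact (IH (N₁ + N₂') (by omega)).1 w' j h t hw'X htkj hEtw' hEth
          · by_cases hsm : ∃ s : Fin n, s < t ∧ E s w'
            · obtain ⟨s, hs, hEs⟩ := hsm
              exact ⟨_, XC.comp hw'X (CB.base ⟨s, t, hs, htkw', hEs, hEtw', hEth⟩)⟩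
            · refine (IH (N₁ + N₂') (by omega)).2 w' j h t hw'X htkj htkw' ?_ hEth
              intro s hEs
              rcases lt_trichotomy s t with h2 | h2 | h2
              · exact absurd ⟨s, h2, hEs⟩ hsm
              · exact absurd (h2 ▸ hEs) hEtw'
              · exact h2

lemma prec_inr_inl {x y : Fin n ⊕ β} (hp : Prec n β E k x y) :
    ∀ i : Fin n, y = inl i → ∃ i' : Fin n, x = inl i' := by
  induction hp with
  | O _ => exact fun i _ => ⟨_, rfl⟩
  | A _ => intro i hi; simp at hi
  | TB _ _ _ _ _ => intro i hi; simp at hi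
  | FB _ _ _ _ _ => intro i hi; simp at hi
  | T _ _ ih1 ih2 =>
    intro i hi
    obtain ⟨i', hi'⟩ := ih2 i hi
    exact ih1 i' hi'

lemma prec_to_xc (hk : ∀ j : β, E (k j) j ∧ ∀ i : Fin n, E i j → i ≤ k j)
    {x y : Fin n ⊕ β} (hp : Prec n β E k x y) :
    ∀ h j : β, x = inr h → y = inr j → ∃ N, XC n β E k N h j := by
  induction hp with
  | O _ => intro h j hx hy; simp at hx
  | A _ => intro h j hx hy; simp at hx
  | TB h1 h2 h3 h4 h5 =>
    intro h j hx hy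
    simp only [Sum.inr.injEq] at hx hy
    subst hx; subst hy
    exact ⟨1, XC.base (CB.base ⟨_, _, h1, h2, h3, h4, h5⟩)⟩
  | FB _ htk hEtw hEth ih =>
    intro h j hx hy
    simp only [Sum.inr.injEq] at hx hy
    subst hx; subst hy
    obtain ⟨N, hxc⟩ := ih _ _ rfl rfl
    exact (key hk N).1 _ _ _ _ hxc htk hEtw hEth
  | @T p q r hpq hqr ih1 ih2 =>
    intro h j hx hy
    subst hx; subst hy
    rcases q with i | b
    · obtain ⟨i', hi'⟩ := prec_inr_inl hpq i rfl
      simp at hi'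
    · obtain ⟨N₁, h1⟩ := ih1 h b rfl rfl
      obtain ⟨N₂, h2⟩ := ih2 b j rfl rfl
      exact xc_trans h1 h2

end Stmt3Aux

/-- For `b_h, b_j ∈ B`, `b_h ≺° b_j` holds iff (1) `b_h` is a basis of `b_j`,
or (2) `b_h` is a `j`-descendant of a basis of `b_j`, or (3) `b_h` is a basis of some `b_q`
with `b_q ≺° b_j`, or (4) `b_h` is a `q`-descendant of a basis of some `b_q` with `b_q ≺° b_j`. -/
theorem stmt3 (n : ℕ) (β : Type) [Fintype β] (E : Fin n → β → Prop) (k : β → Fin n)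
    (hk : ∀ j : β, E (k j) j ∧ ∀ i : Fin n, E i j → i ≤ k j)
    (h j : β) :
    Prec n β E k (inr h) (inr j) ↔
      IsBasis n β E k h j ∨
      (∃ v : β, IsBasis n β E k v j ∧ IsDescendant n β E k j v h) ∨
      (∃ q : β, Prec n β E k (inr q) (inr j) ∧ IsBasis n β E k h q) ∨
      (∃ q : β, Prec n β E k (inr q) (inr j) ∧
        ∃ v : β, IsBasis n β E k v q ∧ IsDescendant n β E k q v h) := by
  constructor
  · intro hp
    obtain ⟨N, hxc⟩ := Stmt3Aux.prec_to_xc hk hp h j rfl rfl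
    cases hxc with
    | base hcb =>
      obtain ⟨v, hb, hvh⟩ := Stmt3Aux.cb_char hcb
      rcases hvh with rfl | hd
      · exact Or.inl hb
      · exact Or.inr (Or.inl ⟨v, hb, hd⟩)
    | comp hq hcb =>
      obtain ⟨v, hb, hvh⟩ := Stmt3Aux.cb_char hcb
      rcases hvh with rfl | hd
      · exact Or.inr (Or.inr (Or.inl ⟨_, Stmt3Aux.xc_prec hq, hb⟩))
      · exact Or.inr (Or.inr (Or.inr ⟨_, Stmt3Aux.xc_prec hq, v, hb, hd⟩))
  · rintro (hb | ⟨v, hb, hd⟩ | ⟨q, hq, hb⟩ | ⟨q, hq, v, hb, hd⟩)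
    · exact Stmt3Aux.basis_prec hb
    · exact Stmt3Aux.desc_prec (Stmt3Aux.basis_prec hb) hd
    · exact Prec.T (Stmt3Aux.basis_prec hb) hq
    · exact Prec.T (Stmt3Aux.desc_prec (Stmt3Aux.basis_prec hb) hd) hq
end

section
/- If b_h ≺° b_j for b_h, b_j ∈ B, then there exists a sequence of distinct indices q_1, q_2, …, q_p with q_1 = h and q_p = j such that for each 1 ≤ r ≤ p−1, b_{q_r} is either a basis of b_{q_{r+1}} or a q_{r+1}-descendant of a basis of b_{q_{r+1}}. -/
open Sum

namespace Stmt4Aux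

variable {n : ℕ} {β : Type} {E : Fin n → β → Prop} {k : β → Fin n}

/-- The one-step relation of the desired chain. -/
def SS (E : Fin n → β → Prop) (k : β → Fin n) (h j : β) : Prop :=
  IsBasis n β E k h j ∨ ∃ v : β, IsBasis n β E k v j ∧ IsDescendant n β E k j v h

/-- The descendant-step relation. -/
def DD (E : Fin n → β → Prop) (k : β → Fin n) (j x y : β) : Prop :=
  ∃ t : Fin n, k j < t ∧ E t x ∧ E t y

lemma isDescendant_iff {j w h : β} :
    IsDescendant n β E k j w h ↔ Relation.TransGen (DD E k j) w h := Iff.rfl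

/-- Chains of `SS` with `ℓ+1` steps. -/
def TSn (E : Fin n → β → Prop) (k : β → Fin n) : ℕ → β → β → Prop
  | 0, x, j => SS E k x j
  | (ℓ+1), x, j => ∃ z, SS E k x z ∧ TSn E k ℓ z j

lemma tsn_tg : ∀ {ℓ : ℕ} {x j : β}, TSn E k ℓ x j → Relation.TransGen (SS E k) x j
  | 0, _, _, h => Relation.TransGen.single h
  | (_+1), _, _, ⟨_, h1, h2⟩ => Relation.TransGen.head h1 (tsn_tg h2)

lemma tsn_tail : ∀ {ℓ : ℕ} {x b c : β}, TSn E k ℓ x b → SS E k b c → TSn E k (ℓ+1) x c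
  | 0, _, _, _, h, hbc => ⟨_, h, hbc⟩
  | (_+1), _, _, _, ⟨z, h1, h2⟩, hbc => ⟨z, h1, tsn_tail h2 hbc⟩

lemma tg_tsn {x j : β} (h : Relation.TransGen (SS E k) x j) : ∃ ℓ, TSn E k ℓ x j := by
  induction h with
  | single h => exact ⟨0, h⟩
  | tail _ hbc ih => obtain ⟨ℓ, hℓ⟩ := ih; exact ⟨ℓ+1, tsn_tail hℓ hbc⟩

/-- A vertex reflexively desc-reachable from a basis of `z₂` is `SS`-below `z₂`. -/
lemma rtg_ss {z₂ v₂ w : β} (hb : IsBasis n β E k v₂ z₂)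
    (hw : Relation.ReflTransGen (DD E k z₂) v₂ w) : SS E k w z₂ := by
  rcases (Relation.reflTransGen_iff_eq_or_transGen.mp hw) with rfl | htg
  · exact Or.inl hb
  · exact Or.inr ⟨v₂, hb, htg⟩

lemma ss_of_basis {h j : β} (hb : IsBasis n β E k h j) : SS E k h j := Or.inl hb

lemma ss_of_desc {v h j : β} (hb : IsBasis n β E k v j)
    (hd : Relation.TransGen (DD E k j) v h) : SS E k h j := Or.inr ⟨v, hb, hd⟩

lemma tsn_head {x z j : β} {ℓ : ℕ} (h1 : SS E k x z) (h2 : TSn E k ℓ z j) :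
    TSn E k (ℓ+1) x j := ⟨z, h1, h2⟩

section walk
variable (hk : ∀ j : β, E (k j) j ∧ ∀ i : Fin n, E i j → i ≤ k j)
include hk

/-- The "walk down the descendant chain" lemma. -/
lemma walk {j z₂ v₂ y : β} {t : Fin n}
    (hb : IsBasis n β E k v₂ z₂) (hkt : k z₂ < t) (hty : E t y)
    (hfin : ∀ w, Relation.ReflTransGen (DD E k z₂) v₂ w → E t w →
      Relation.TransGen (SS E k) y j)
    (hTS : ∀ w, Relation.ReflTransGen (DD E k z₂) v₂ w → Relation.TransGen (SS E k) w j) :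
    ∀ z, Relation.ReflTransGen (DD E k z₂) v₂ z → ∀ r : Fin n, t ≤ r → E r z →
      Relation.TransGen (SS E k) y j := by
  intro z hz
  induction hz with
  | refl =>
    intro r htr hrz
    by_cases hE : E t v₂
    · exact hfin v₂ Relation.ReflTransGen.refl hE
    · obtain ⟨s, u, hsu, huk, hsz, hnu, huv⟩ := hb
      have htr' : t < r := lt_of_le_of_ne htr (fun he => hE (he ▸ hrz))
      have htkv : t < k v₂ := lt_of_lt_of_le htr' ((hk v₂).2 r hrz)
      have hby : IsBasis n β E k y v₂ := ⟨u, t, lt_trans huk hkt, htkv, huv, hE, hty⟩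
      exact (Relation.TransGen.single (ss_of_basis hby)).trans (hTS v₂ Relation.ReflTransGen.refl)
  | @tail z' z hz' hstep ih =>
    intro r htr hrz
    by_cases hE : E t z
    · exact hfin z (hz'.tail hstep) hE
    · obtain ⟨r', hr'k, hr'z', hr'z⟩ := hstep
      have htr' : t < r := lt_of_le_of_ne htr (fun he => hE (he ▸ hrz))
      have htkz : t < k z := lt_of_lt_of_le htr' ((hk z).2 r hrz)
      by_cases hr't : r' < t
      · have hby : IsBasis n β E k y z := ⟨r', t, hr't, htkz, hr'z, hE, hty⟩
        exact (Relation.TransGen.single (ss_of_basis hby)).trans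
          (hTS z (hz'.tail ⟨r', hr'k, hr'z', hr'z⟩))
      · exact ih r' (le_of_not_gt hr't) hr'z'

/-- Main mutual induction. `P`: the reach set of `j` is closed under descendant steps.
`Q`: variant where the partner has all neighbors above `t`. -/
lemma PQ : ∀ ℓ : ℕ,
    (∀ (j : β) (t : Fin n) (y x : β), TSn E k ℓ x j → k j < t → E t x → E t y →
      Relation.TransGen (SS E k) y j) ∧
    (∀ (j : β) (t : Fin n) (y z : β), TSn E k ℓ z j → (∀ i : Fin n, E i z → t < i) →
      k j < t → E t y → Relation.TransGen (SS E k) y j) := by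
  intro ℓ
  induction ℓ using Nat.strong_induction_on with
  | _ ℓ IH =>
  cases ℓ with
  | zero =>
    constructor
    · intro j t y x hts ht htx hty
      rcases hts with hbx | ⟨v, hb, hdesc⟩
      · exact Relation.TransGen.single
          (ss_of_desc hbx (Relation.TransGen.single ⟨t, ht, htx, hty⟩))
      · exact walk hk hb ht hty
          (fun w hw htw => Relation.TransGen.single
            (ss_of_desc hb (Relation.TransGen.tail' hw ⟨t, ht, htw, hty⟩)))
          (fun w hw => Relation.TransGen.single (rtg_ss hb hw))
          x hdesc.to_reflTransGen t le_rfl htx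
    · intro j t y z hts h1 ht hty
      rcases hts with ⟨s, u, hsu, huk, hsj, hnu, huz⟩ | ⟨v, hb, hdesc⟩
      · exact absurd (h1 u huz) (not_lt_of_gt (lt_trans huk ht))
      · exact walk hk hb ht hty
          (fun w hw htw => Relation.TransGen.single
            (ss_of_desc hb (Relation.TransGen.tail' hw ⟨t, ht, htw, hty⟩)))
          (fun w hw => Relation.TransGen.single (rtg_ss hb hw))
          z hdesc.to_reflTransGen (k z) (le_of_lt (h1 (k z) (hk z).1)) (hk z).1
  | succ ℓ' =>
    have IH' := IH ℓ' (Nat.lt_succ_self ℓ')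
    have hP : ∀ (j : β) (t : Fin n) (y x : β), TSn E k (ℓ'+1) x j → k j < t → E t x →
        E t y → Relation.TransGen (SS E k) y j := by
      intro j t y x hts ht htx hty
      obtain ⟨z₂, hxz₂, hts'⟩ := hts
      by_cases hE : E t z₂
      · exact IH'.1 j t y z₂ hts' ht hE hty
      · rcases lt_trichotomy t (k z₂) with hlt | heq | hgt
        · by_cases hex : ∃ s : Fin n, E s z₂ ∧ s < t
          · obtain ⟨s, hsz, hst⟩ := hex
            exact Relation.TransGen.head (ss_of_basis ⟨s, t, hst, hlt, hsz, hE, hty⟩) (tsn_tg hts')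
          · have h1 : ∀ i : Fin n, E i z₂ → t < i := fun i hi =>
              lt_of_le_of_ne (le_of_not_gt (fun hl => hex ⟨i, hi, hl⟩))
                (fun he => hE (he ▸ hi))
            exact IH'.2 j t y z₂ hts' h1 ht hty
        · exact absurd (heq ▸ (hk z₂).1) hE
        · rcases hxz₂ with hbx | ⟨v₂, hb₂, hdesc₂⟩
          · exact Relation.TransGen.head
              (ss_of_desc hbx (Relation.TransGen.single ⟨t, hgt, htx, hty⟩)) (tsn_tg hts')
          · exact Relation.TransGen.head
              (ss_of_desc hb₂ (hdesc₂.tail ⟨t, hgt, htx, hty⟩)) (tsn_tg hts')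
    refine ⟨hP, ?_⟩
    intro j t y z hts h1 ht hty
    obtain ⟨z₂, hzz₂, hts'⟩ := hts
    by_cases hE : E t z₂
    · exact IH'.1 j t y z₂ hts' ht hE hty
    · rcases lt_trichotomy t (k z₂) with hlt | heq | hgt
      · by_cases hex : ∃ s : Fin n, E s z₂ ∧ s < t
        · obtain ⟨s, hsz, hst⟩ := hex
          exact Relation.TransGen.head (ss_of_basis ⟨s, t, hst, hlt, hsz, hE, hty⟩) (tsn_tg hts')
        · have h1' : ∀ i : Fin n, E i z₂ → t < i := fun i hi =>
            lt_of_le_of_ne (le_of_not_gt (fun hl => hex ⟨i, hi, hl⟩))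
              (fun he => hE (he ▸ hi))
          exact IH'.2 j t y z₂ hts' h1' ht hty
      · exact absurd (heq ▸ (hk z₂).1) hE
      · rcases hzz₂ with ⟨s, u, hsu, huk, hsz₂, hnu, huz⟩ | ⟨v₂, hb₂, hdesc₂⟩
        · exact absurd (h1 u huz) (not_lt_of_gt (lt_trans huk hgt))
        · exact walk hk hb₂ hgt hty
            (fun w hw htw => hP j t y w (tsn_head (rtg_ss hb₂ hw) hts') ht htw hty)
            (fun w hw => tsn_tg (tsn_head (rtg_ss hb₂ hw) hts'))
            z hdesc₂.to_reflTransGen (k z) (le_of_lt (h1 (k z) (hk z).1)) (hk z).1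

/-- `Prec` restricted to `B × B` implies `TransGen SS`. -/
lemma prec_tg {a b : Fin n ⊕ β} (hab : Prec n β E k a b) :
    ∀ h : β, a = inr h → (∀ i : Fin n, b = inl i → False) ∧
      (∀ j : β, b = inr j → Relation.TransGen (SS E k) h j) := by
  induction hab with
  | O _ => exact fun h hh => by cases hh
  | A _ => exact fun h hh => by cases hh
  | TB hst htk hsj hnt hth =>
    intro h' hh
    refine ⟨fun i hi => (by cases hi), fun j' hj => ?_⟩
    obtain rfl : _ = h' := Sum.inr.inj hh
    obtain rfl : _ = j' := Sum.inr.inj hj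
    exact Relation.TransGen.single (ss_of_basis ⟨_, _, hst, htk, hsj, hnt, hth⟩)
  | FB hwj hkt htw hth ihw =>
    intro h' hh
    refine ⟨fun i hi => (by cases hi), fun j' hj => ?_⟩
    obtain rfl : _ = h' := Sum.inr.inj hh
    obtain rfl : _ = j' := Sum.inr.inj hj
    have htg := (ihw _ rfl).2 _ rfl
    obtain ⟨ℓ, hts⟩ := tg_tsn htg
    exact (PQ hk ℓ).1 _ _ _ _ hts hkt htw hth
  | @T pp qq rr hpq hqr ih1 ih2 =>
    intro h' hh
    constructor
    · intro i hi
      cases qq with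
      | inl tq => exact (ih1 h' hh).1 tq rfl
      | inr m => exact (ih2 m rfl).1 i hi
    · intro j' hj
      cases qq with
      | inl tq => exact absurd rfl ((ih1 h' hh).1 tq)
      | inr m => exact ((ih1 h' hh).2 m rfl).trans ((ih2 m rfl).2 j' hj)

end walk

/-! ### From `TransGen` to a duplicate-free chain -/

lemma tg_list {r : β → β → Prop} {a b : β} (h : Relation.TransGen r a b) :
    ∃ l : List β, List.Chain' r (a :: l) ∧ (a :: l).getLast? = some b := by
  induction h with
  | single hab => exact ⟨[_], by simpa [List.Chain'] using hab, rfl⟩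
  | @tail b' c _ hbc ih =>
    obtain ⟨l, hc, hl⟩ := ih
    refine ⟨l ++ [c], ?_, ?_⟩
    · rw [show a :: (l ++ [c]) = (a :: l) ++ [c] by simp]
      rw [List.Chain', List.isChain_append]
      refine ⟨hc, List.isChain_singleton c, ?_⟩
      intro x hx y hy
      rw [hl] at hx
      simp at hx hy
      subst hx; subst hy; exact hbc
    · rw [show a :: (l ++ [c]) = (a :: l) ++ [c] by simp]
      rw [List.getLast?_append_cons]
      rfl

lemma exists_dup (l : List β) (hnd : ¬ l.Nodup) :
    ∃ (l₁ : List β) (x : β) (l₂ l₃ : List β), l = l₁ ++ x :: (l₂ ++ x :: l₃) := by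
  induction l with
  | nil => exact absurd List.nodup_nil hnd
  | cons a tl ih =>
    by_cases hm : a ∈ tl
    · obtain ⟨s, t, rfl⟩ := List.append_of_mem hm
      exact ⟨[], a, s, t, rfl⟩
    · have : ¬ tl.Nodup := fun hn => hnd (List.nodup_cons.mpr ⟨hm, hn⟩)
      obtain ⟨l₁, x, l₂, l₃, rfl⟩ := ih this
      exact ⟨a :: l₁, x, l₂, l₃, rfl⟩

lemma chain'_splice {r : β → β → Prop} {l₁ l₂ l₃ : List β} {x : β}
    (h : List.Chain' r (l₁ ++ x :: (l₂ ++ x :: l₃))) :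
    List.Chain' r (l₁ ++ x :: l₃) := by
  rw [List.Chain', List.isChain_append] at h ⊢
  obtain ⟨h1, h2, h3⟩ := h
  refine ⟨h1, ?_, ?_⟩
  · have h2' : List.IsChain r ((x :: l₂) ++ (x :: l₃)) := by
      simpa using h2
    exact (List.isChain_append.mp h2').2.1
  · intro u hu y hy
    exact h3 u hu y (by simpa using hy)

lemma dedup_chain {r : β → β → Prop} :
    ∀ (N : ℕ) (l : List β), l.length ≤ N → List.Chain' r l →
      ∀ hd lst, l.head? = some hd → l.getLast? = some lst →
      ∃ l' : List β, l'.Nodup ∧ List.Chain' r l' ∧ l'.head? = some hd ∧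
        l'.getLast? = some lst := by
  intro N
  induction N with
  | zero =>
    intro l hlen _ hd lst hhd _
    interval_cases hl : l.length
    · simp [List.length_eq_zero_iff.mp hl] at hhd
  | succ N ih =>
    intro l hlen hch hd lst hhd hlst
    by_cases hnd : l.Nodup
    · exact ⟨l, hnd, hch, hhd, hlst⟩
    · obtain ⟨l₁, x, l₂, l₃, rfl⟩ := exists_dup l hnd
      have hch' := chain'_splice hch
      have hhd' : (l₁ ++ x :: l₃).head? = some hd := by
        cases l₁ with
        | nil => simpa using hhd
        | cons a t => simpa using hhd
      have hlst' : (l₁ ++ x :: l₃).getLast? = some lst := by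
        rw [List.getLast?_append_cons] at hlst ⊢
        rw [show x :: (l₂ ++ x :: l₃) = (x :: l₂) ++ (x :: l₃) by simp] at hlst
        rw [List.getLast?_append_cons] at hlst
        exact hlst
      have hlen' : (l₁ ++ x :: l₃).length ≤ N := by
        simp only [List.length_append, List.length_cons] at hlen ⊢
        omega
      exact ih _ hlen' hch' hd lst hhd' hlst'

end Stmt4Aux

open Stmt4Aux in
theorem stmt4 (n : ℕ) (β : Type) [Fintype β] (E : Fin n → β → Prop) (k : β → Fin n)
    (hk : ∀ j : β, E (k j) j ∧ ∀ i : Fin n, E i j → i ≤ k j)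
    (h j : β) (hhj : Prec n β E k (inr h) (inr j)) :
    ∃ (p : ℕ) (q : Fin (p + 1) → β), Function.Injective q ∧ q 0 = h ∧ q (Fin.last p) = j ∧
      ∀ r : Fin p,
        IsBasis n β E k (q r.castSucc) (q r.succ) ∨
        ∃ v : β, IsBasis n β E k v (q r.succ) ∧
          IsDescendant n β E k (q r.succ) v (q r.castSucc) := by
  have htg : Relation.TransGen (SS E k) h j := (prec_tg hk hhj h rfl).2 j rfl
  obtain ⟨l0, hch0, hlst0⟩ := tg_list htg
  obtain ⟨l, hnd, hch, hhd, hlst⟩ :=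
    dedup_chain (h :: l0).length (h :: l0) le_rfl hch0 h j rfl hlst0
  have hne : l ≠ [] := by
    intro hl; rw [hl] at hhd; simp at hhd
  have hlen : l.length - 1 + 1 = l.length :=
    Nat.succ_pred_eq_of_pos (List.length_pos_iff.mpr hne)
  refine ⟨l.length - 1, fun i => l.get (Fin.cast hlen i), ?_, ?_, ?_, ?_⟩
  · exact (List.nodup_iff_injective_get.mp hnd).comp (Fin.cast_injective hlen)
  · cases l with
    | nil => exact absurd hhd (by simp)
    | cons a t => exact Option.some.inj hhd
  · have h1 : l.getLast hne = j := Option.some.inj ((List.getLast?_eq_getLast hne) ▸ hlst)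
    rw [List.getLast_eq_getElem] at h1
    exact h1
  · intro r
    have hr : (r : ℕ) < l.length - 1 := by
      have := r.isLt
      omega
    exact List.isChain_iff_getElem.mp hch r (by omega)
end

section
/- The rule sets R = {(O),(A),(TB),(FB),(T)} and R' = {(O),(A),(TB),(FB'),(T)} generate the same relation on A ∪ B: a pair c ≺° d is derivable from the rules of R if and only if it is derivable from the rules of R'. -/
open Sum

/-- The relation generated by the rules (O), (A), (TB), (FB'), (T), where rule (FB') reads:
if `a_t ≺° b_j`, `k_j < t` and `a_t b_h ∈ E`, then `b_h ≺° b_j`. -/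
inductive Prec' (n : ℕ) (β : Type) (E : Fin n → β → Prop) (k : β → Fin n) :
    (Fin n ⊕ β) → (Fin n ⊕ β) → Prop
  | O : ∀ {i j : Fin n}, i < j → Prec' n β E k (inl i) (inl j)
  | A : ∀ {t : Fin n} {j : β}, E t j → Prec' n β E k (inl t) (inr j)
  | TB : ∀ {s t : Fin n} {h j : β}, s < t → t < k j → E s j → ¬ E t j → E t h →
      Prec' n β E k (inr h) (inr j)
  | FB' : ∀ {t : Fin n} {h j : β}, Prec' n β E k (inl t) (inr j) → k j < t →
      E t h → Prec' n β E k (inr h) (inr j)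
  | T : ∀ {p q r : Fin n ⊕ β}, Prec' n β E k p q → Prec' n β E k q r → Prec' n β E k p r

section Aux

variable {n : ℕ} {β : Type} {E : Fin n → β → Prop} {k : β → Fin n}

lemma prec_left {p q : Fin n ⊕ β} (h : Prec n β E k p q) :
    ∀ i : Fin n, q = inl i → ∃ i', p = inl i' ∧ i' < i := by
  induction h with
  | O hij => intro i hi; injection hi with hi; subst hi; exact ⟨_, rfl, hij⟩
  | A _ => intro i hi; simp at hi
  | TB _ _ _ _ _ => intro i hi; simp at hi
  | FB _ _ _ _ => intro i hi; simp at hi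
  | T h1 h2 ih1 ih2 =>
    intro i hi
    obtain ⟨i'', hq, hlt⟩ := ih2 i hi
    obtain ⟨i', hp, hlt'⟩ := ih1 i'' hq
    exact ⟨i', hp, hlt'.trans hlt⟩

lemma prec_decomp {p q : Fin n ⊕ β} (h : Prec n β E k p q) :
    ∀ (t : Fin n) (j : β), p = inl t → q = inr j →
      ∃ (t' : Fin n) (w : β), t ≤ t' ∧ E t' w ∧
        (w = j ∨ Prec n β E k (inr w) (inr j)) := by
  induction h with
  | O _ => intro t j _ hq; simp at hq
  | A hE =>
    intro t' j' hp hq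
    injection hp with hp; subst hp
    injection hq with hq; subst hq
    exact ⟨_, _, le_refl _, hE, Or.inl rfl⟩
  | TB _ _ _ _ _ => intro t j hp _; simp at hp
  | FB _ _ _ _ => intro t j hp _; simp at hp
  | T h1 h2 ih1 ih2 =>
    intro t j hp hq
    subst hp; subst hq
    rename_i q
    cases q with
    | inl i =>
      obtain ⟨i', hpi, hlt⟩ := prec_left h1 i rfl
      injection hpi with hpi; subst hpi
      obtain ⟨t', w, hle, hEw, hw⟩ := ih2 i j rfl rfl
      exact ⟨t', w, le_of_lt (lt_of_lt_of_le hlt hle), hEw, hw⟩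
    | inr x =>
      obtain ⟨t', w, hle, hEw, hw⟩ := ih1 t x rfl rfl
      rcases hw with rfl | hwx
      · exact ⟨t', w, hle, hEw, Or.inr h2⟩
      · exact ⟨t', w, hle, hEw, Or.inr (Prec.T hwx h2)⟩

lemma prec_key (hk : ∀ j : β, E (k j) j ∧ ∀ i : Fin n, E i j → i ≤ k j)
    {p q : Fin n ⊕ β} (hpq : Prec n β E k p q) :
    ∀ (w j : β), p = inr w → q = inr j →
      ∀ (t : Fin n) (h' : β), k j < t → E t h' → (∃ t', t ≤ t' ∧ E t' w) →
        Prec n β E k (inr h') (inr j) := by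
  induction hpq with
  | O _ => intro w j hp _; simp at hp
  | A _ => intro w j hp _; simp at hp
  | TB hsu huk hEsj hnEuj hEuw =>
    rename_i s u w j
    intro w' j' hp hq
    injection hp with hp; subst hp
    injection hq with hq; subst hq
    intro t h' hkt hEth' hex
    obtain ⟨t', htt', hEt'w⟩ := hex
    have hnode : Prec n β E k (inr w) (inr j) := Prec.TB hsu huk hEsj hnEuj hEuw
    by_cases hEtw : E t w
    · exact Prec.FB hnode hkt hEtw hEth'
    · have htkw : t < k w := by
        have h1 : t' ≤ k w := (hk w).2 t' hEt'w
        rcases lt_or_eq_of_le (le_trans htt' h1) with h2 | h2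
        · exact h2
        · exact absurd (h2 ▸ (hk w).1) hEtw
      have hut : u < t := lt_trans huk hkt
      exact Prec.T (Prec.TB hut htkw hEuw hEtw hEth') hnode
  | FB hWj hku hEuW hEuw ih =>
    rename_i u W w j
    intro w' j' hp hq
    injection hp with hp; subst hp
    injection hq with hq; subst hq
    intro t h' hkt hEth' hex
    obtain ⟨t', htt', hEt'w⟩ := hex
    have hnode : Prec n β E k (inr w) (inr j) := Prec.FB hWj hku hEuW hEuw
    by_cases hEtw : E t w
    · exact Prec.FB hnode hkt hEtw hEth'
    · by_cases hut : u < t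
      · have htkw : t < k w := by
          have h1 : t' ≤ k w := (hk w).2 t' hEt'w
          rcases lt_or_eq_of_le (le_trans htt' h1) with h2 | h2
          · exact h2
          · exact absurd (h2 ▸ (hk w).1) hEtw
        exact Prec.T (Prec.TB hut htkw hEuw hEtw hEth') hnode
      · exact ih W j rfl rfl t h' hkt hEth' ⟨u, le_of_not_gt hut, hEuW⟩
  | T h1 h2 ih1 ih2 =>
    intro w j hp hq
    subst hp; subst hq
    rename_i q
    cases q with
    | inl i =>
      obtain ⟨i', hpi, _⟩ := prec_left h1 i rfl
      simp at hpi
    | inr x =>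
      intro t h' hkt hEth' hex
      obtain ⟨t', htt', hEt'w⟩ := hex
      by_cases hx : t ≤ k x
      · exact ih2 x j rfl rfl t h' hkt hEth' ⟨k x, hx, (hk x).1⟩
      · exact Prec.T (ih1 w x rfl rfl t h' (lt_of_not_ge hx) hEth' ⟨t', htt', hEt'w⟩) h2

lemma prec_to_prec' {p q : Fin n ⊕ β} (h : Prec n β E k p q) : Prec' n β E k p q := by
  induction h with
  | O hij => exact Prec'.O hij
  | A hE => exact Prec'.A hE
  | TB hst htk hEsj hnEtj hEth => exact Prec'.TB hst htk hEsj hnEtj hEth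
  | FB _ hkt hEtw hEth ih => exact Prec'.FB' (Prec'.T (Prec'.A hEtw) ih) hkt hEth
  | T _ _ ih1 ih2 => exact Prec'.T ih1 ih2

lemma prec'_to_prec (hk : ∀ j : β, E (k j) j ∧ ∀ i : Fin n, E i j → i ≤ k j)
    {p q : Fin n ⊕ β} (h : Prec' n β E k p q) : Prec n β E k p q := by
  induction h with
  | O hij => exact Prec.O hij
  | A hE => exact Prec.A hE
  | TB hst htk hEsj hnEtj hEth => exact Prec.TB hst htk hEsj hnEtj hEth
  | FB' _ hkt hEth ih =>
    rename_i t h0 j _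
    obtain ⟨t', w, htt', hEt'w, hw⟩ := prec_decomp ih t j rfl rfl
    rcases hw with rfl | hwj
    · exact absurd ((hk w).2 t' hEt'w) (not_le_of_gt (lt_of_lt_of_le hkt htt'))
    · exact prec_key hk hwj w j rfl rfl t h0 hkt hEth ⟨t', htt', hEt'w⟩
  | T _ _ ih1 ih2 => exact Prec.T ih1 ih2

end Aux

/-- The rule sets `R = {(O),(A),(TB),(FB),(T)}` and
`R' = {(O),(A),(TB),(FB'),(T)}` generate the same relation on `A ∪ B`. -/
theorem stmt6 (n : ℕ) (β : Type) [Fintype β] (E : Fin n → β → Prop) (k : β → Fin n)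
    (hk : ∀ j : β, E (k j) j ∧ ∀ i : Fin n, E i j → i ≤ k j)
    (c d : Fin n ⊕ β) :
    Prec n β E k c d ↔ Prec' n β E k c d := by
  exact ⟨fun h => prec_to_prec' h, fun h => prec'_to_prec hk h⟩
end

section
/- G admits an A-Stick order if and only if the relation ≺° generated by the rules of R (equivalently, by the rules of R') is irreflexive, i.e. is a strict partial order (equivalently: there are no vertices c, d with both c ≺° d and d ≺° c). -/
open Sum

variable {n : ℕ} {β : Type} {E : Fin n → β → Prop} {k : β → Fin n}

lemma prec_inl_inl : ∀ {x y}, Prec n β E k x y → ∀ j : Fin n, y = inl j →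
    ∃ i, x = inl i ∧ i < j := by
  intro x y h
  induction h with
  | O hij => rename_i i j'; intro j hj; injection hj with hj; exact ⟨i, rfl, hj ▸ hij⟩
  | A _ => intro j hj; exact absurd hj (by simp)
  | TB _ _ _ _ _ => intro j hj; exact absurd hj (by simp)
  | FB _ _ _ _ _ => intro j hj; exact absurd hj (by simp)
  | T h1 h2 ih1 ih2 =>
      intro j hj
      obtain ⟨m, hm, hmj⟩ := ih2 j hj
      obtain ⟨i, hi, him⟩ := ih1 m hm
      exact ⟨i, hi, him.trans hmj⟩

lemma decomp : ∀ {x y}, Prec n β E k x y → ∀ (t : Fin n) (j : β), x = inl t → y = inr j →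
    (∃ t', t ≤ t' ∧ E t' j) ∨ ∃ w t', t ≤ t' ∧ E t' w ∧ Prec n β E k (inr w) (inr j) := by
  intro x y h
  induction h with
  | O _ => intro t j _ hy; exact absurd hy (by simp)
  | A hE => rename_i t' j'
            intro t j hx hy; injection hx with hx; injection hy with hy
            subst hx; subst hy; exact Or.inl ⟨_, le_refl _, hE⟩
  | TB _ _ _ _ _ => intro t j hx _; exact absurd hx (by simp)
  | FB _ _ _ _ _ => intro t j hx _; exact absurd hx (by simp)
  | T h1 h2 ih1 ih2 =>
      rename_i p q r
      intro t j hx hy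
      subst hx; subst hy
      cases q with
      | inl m =>
          obtain ⟨i, hi, him⟩ := prec_inl_inl h1 m rfl
          injection hi with hi; subst hi
          rcases ih2 m j rfl rfl with ⟨t', h1', h2'⟩ | ⟨w, t', h1', h2', h3'⟩
          · exact Or.inl ⟨t', le_of_lt (lt_of_lt_of_le him h1'), h2'⟩
          · exact Or.inr ⟨w, t', le_of_lt (lt_of_lt_of_le him h1'), h2', h3'⟩
      | inr v =>
          rcases ih1 t v rfl rfl with ⟨t', h1', h2'⟩ | ⟨w, t', h1', h2', h3'⟩
          · exact Or.inr ⟨v, t', h1', h2', h2⟩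
          · exact Or.inr ⟨w, t', h1', h2', Prec.T h3' h2⟩

lemma easyStep (hk : ∀ j : β, E (k j) j ∧ ∀ i : Fin n, E i j → i ≤ k j)
    {w j : β} {t t' : Fin n} {h : β}
    (hwj : Prec n β E k (inr w) (inr j)) (hjt : k j < t) (htt' : t ≤ t') (ht'w : E t' w)
    (hth : E t h) (hdis : E t w ∨ ∃ s, s < t ∧ E s w) : Prec n β E k (inr h) (inr j) := by
  by_cases htw : E t w
  · exact Prec.FB hwj hjt htw hth
  · rcases hdis with htw' | ⟨s, hst, hsw⟩
    · exact absurd htw' htw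
    · have htk : t < k w := by
        rcases lt_or_eq_of_le (le_trans htt' ((hk w).2 t' ht'w)) with h' | h'
        · exact h'
        · exact absurd (h' ▸ (hk w).1) htw
      exact Prec.T (Prec.TB hst htk hsw htw hth) hwj

lemma keyM (hk : ∀ j : β, E (k j) j ∧ ∀ i : Fin n, E i j → i ≤ k j) :
    ∀ {x y}, Prec n β E k x y → ∀ (w j : β) (t t' : Fin n) (h : β), x = inr w → y = inr j →
    k j < t → t ≤ t' → E t' w → E t h → Prec n β E k (inr h) (inr j) := by
  intro x y hxy
  induction hxy with
  | O _ => intro w j t t' h hx _; exact absurd hx (by simp)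
  | A _ => intro w j t t' h hx _; exact absurd hx (by simp)
  | TB hsu huk hsj hnuj huw =>
      rename_i s u h' j'
      intro w j t t' h hx hy hjt htt' ht'w hth
      injection hx with hx; injection hy with hy; subst hx; subst hy
      exact easyStep hk (Prec.TB hsu huk hsj hnuj huw) hjt htt' ht'w hth
        (Or.inr ⟨u, lt_trans huk hjt, huw⟩)
  | FB hsub hju huw' huw ih =>
      rename_i u w' h' j'
      intro w j t t' h hx hy hjt htt' ht'w hth
      injection hx with hx; injection hy with hy; subst hx; subst hy
      rcases le_or_gt t u with htu | hut
      · exact ih _ _ _ u _ rfl rfl hjt htu huw' hth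
      · exact easyStep hk (Prec.FB hsub hju huw' huw) hjt htt' ht'w hth
          (Or.inr ⟨u, hut, huw⟩)
  | T h1 h2 ih1 ih2 =>
      rename_i p q r
      intro w j t t' h hx hy hjt htt' ht'w hth
      subst hx; subst hy
      cases q with
      | inl m => obtain ⟨i, hi, _⟩ := prec_inl_inl h1 m rfl; exact absurd hi (by simp)
      | inr v =>
          rcases lt_or_ge (k v) t with hvt | htv
          · exact Prec.T (ih1 _ v _ _ _ rfl rfl hvt htt' ht'w hth) h2
          · exact ih2 v _ _ (k v) _ rfl rfl hjt htv (hk v).1 hth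

lemma keyL (hk : ∀ j : β, E (k j) j ∧ ∀ i : Fin n, E i j → i ≤ k j)
    {t : Fin n} {j h : β} (hP : Prec n β E k (inl t) (inr j)) (hjt : k j < t)
    (hth : E t h) : Prec n β E k (inr h) (inr j) := by
  rcases decomp hP t j rfl rfl with ⟨t', htt', ht'j⟩ | ⟨w, t', htt', ht'w, hwj⟩
  · exact absurd ((hk j).2 t' ht'j) (not_le.2 (lt_of_lt_of_le hjt htt'))
  · exact keyM hk hwj _ _ _ t' _ rfl rfl hjt htt' ht'w hth


lemma prec_sub (hk : ∀ j : β, E (k j) j ∧ ∀ i : Fin n, E i j → i ≤ k j)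
    {r : (Fin n ⊕ β) → (Fin n ⊕ β) → Prop} (hor : IsAStickOrder n β E r) :
    ∀ {x y}, Prec n β E k x y → r x y := by
  obtain ⟨⟨hsto, hedge, hforb⟩, hA⟩ := hor
  have htri : ∀ a b, r a b ∨ a = b ∨ r b a := fun a b => by
    by_cases h1 : r a b
    · exact Or.inl h1
    by_cases h2 : r b a
    · exact Or.inr (Or.inr h2)
    exact Or.inr (Or.inl (hsto.trichotomous a b h1 h2))
  have htrans := hsto.trans
  intro x y hxy
  induction hxy with
  | O hij => exact (hA _ _).2 hij
  | A hE => exact hedge _ _ hE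
  | TB hst htk hsj hntj hth =>
      rename_i s t h j
      have hhj : h ≠ j := fun e => hntj (e ▸ hth)
      rcases htri (inr h) (inr j) with h' | h' | h'
      · exact h'
      · exact absurd (inr.inj h') hhj
      · exact absurd ⟨t, s, j, h, (hA s t).2 hst,
          htrans _ _ _ ((hA t (k j)).2 htk) (hedge (k j) j (hk j).1), h', hsj, hth, hntj⟩ hforb
  | FB hsub hjt htw hth ih =>
      rename_i t w h j
      have hntj : ¬ E t j := fun e => absurd ((hk j).2 t e) (not_le.2 hjt)
      have hhj : h ≠ j := fun e => hntj (e ▸ hth)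
      rcases htri (inr h) (inr j) with h' | h' | h'
      · exact h'
      · exact absurd (inr.inj h') hhj
      · exact absurd ⟨t, k j, j, h, (hA (k j) t).2 hjt,
          htrans _ _ _ (hedge t w htw) ih, h', (hk j).1, hth, hntj⟩ hforb
  | T _ _ ih1 ih2 => exact htrans _ _ _ ih1 ih2


def gval (n : ℕ) (β : Type) (f : β → ℕ) : (Fin n ⊕ β) → ℕ :=
  Sum.elim (fun i => 2 * (i : ℕ) + 1) (fun b => 2 * f b)

@[simp] lemma gval_inl (f : β → ℕ) (i : Fin n) : gval n β f (inl i) = 2 * (i : ℕ) + 1 := rfl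
@[simp] lemma gval_inr (f : β → ℕ) (b : β) : gval n β f (inr b) = 2 * f b := rfl


/-- `G` admits an A-Stick order iff the relation `≺°` generated by the
rules (O),(A),(TB),(FB),(T) is irreflexive (i.e. is a strict partial order). -/
theorem stmt7 (n : ℕ) (β : Type) [Fintype β] (E : Fin n → β → Prop) (k : β → Fin n)
    (hk : ∀ j : β, E (k j) j ∧ ∀ i : Fin n, E i j → i ≤ k j) :
    (∃ r, IsAStickOrder n β E r) ↔ ∀ c : Fin n ⊕ β, ¬ Prec n β E k c c := by
  constructor
  · rintro ⟨r, hor⟩ c hc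
    exact hor.1.1.irrefl c (prec_sub hk hor hc)
  · intro hirr
    classical
    have hex : ∀ b : β, ∃ m : ℕ, n ≤ m ∨ ∃ h : m < n, ¬ Prec n β E k (inl ⟨m, h⟩) (inr b) :=
      fun b => ⟨n, Or.inl le_rfl⟩
    set f : β → ℕ := fun b => Nat.find (hex b) with hfdef
    have hfle : ∀ b, f b ≤ n := fun b => Nat.find_le (Or.inl le_rfl)
    have hchar : ∀ (b : β) (i : Fin n), Prec n β E k (inl i) (inr b) ↔ (i : ℕ) < f b := by
      intro b i
      constructor
      · intro h
        by_contra hle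
        push_neg at hle
        rcases Nat.find_spec (hex b) with h' | ⟨hfn, hnp⟩
        · exact absurd (lt_of_lt_of_le i.isLt (le_trans h' hle)) (lt_irrefl _)
        · rcases lt_or_eq_of_le hle with hlt | heq
          · exact hnp (Prec.T (Prec.O (show (⟨f b, hfn⟩ : Fin n) < i from hlt)) h)
          · exact hnp (by rw [show (⟨f b, hfn⟩ : Fin n) = i from Fin.ext heq]; exact h)
      · intro h
        have hm := Nat.find_min (hex b) h
        push_neg at hm
        have := hm.2 i.isLt
        simpa using this
    have hmono : ∀ b b', Prec n β E k (inr b) (inr b') → f b ≤ f b' := by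
      intro b b' hbb'
      by_contra hlt
      push_neg at hlt
      rcases Nat.find_spec (hex b') with h' | ⟨hfn, hnp⟩
      · exact absurd (lt_of_lt_of_le hlt (hfle b)) (not_lt.2 h')
      · exact hnp (Prec.T ((hchar b ⟨f b', hfn⟩).2 hlt) hbb')
    set r0 : β → β → Prop := fun b b' => b = b' ∨ Prec n β E k (inr b) (inr b') with hr0def
    haveI hpo : IsPartialOrder β r0 :=
      { refl := fun b => Or.inl rfl
        trans := by
          rintro a b c (rfl | h1) h2
          · exact h2
          · rcases h2 with rfl | h2
            · exact Or.inr h1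
            · exact Or.inr (Prec.T h1 h2)
        antisymm := by
          rintro a b (rfl | h1) h2
          · rfl
          · rcases h2 with rfl | h2
            · rfl
            · exact absurd (Prec.T h1 h2) (hirr _) }
    obtain ⟨s, hlin, hsub⟩ := extend_partialOrder r0
    haveI := hlin
    have hPb : ∀ b b', Prec n β E k (inr b) (inr b') → s b b' ∧ b ≠ b' :=
      fun b b' h => ⟨hsub _ _ (Or.inr h), fun e => hirr _ (e ▸ h)⟩
    refine ⟨fun x y => gval n β f x < gval n β f y ∨
      (gval n β f x = gval n β f y ∧ ∃ b b', x = inr b ∧ y = inr b' ∧ s b b' ∧ b ≠ b'),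
      ⟨⟨?_, ?_, ?_⟩, ?_⟩⟩
    · refine { trichotomous := ?_, irrefl := ?_, trans := ?_ }
      · -- trichotomous
        intro x y hn1 hn2
        refine ((?_ : _ ∨ x = y ∨ _).resolve_left hn1).resolve_right hn2
        rcases lt_trichotomy (gval n β f x) (gval n β f y) with h | h | h
        · exact Or.inl (Or.inl h)
        · cases x with
          | inl i =>
            cases y with
            | inl j =>
              refine Or.inr (Or.inl ?_)
              simp only [gval_inl] at h
              exact congrArg inl (Fin.ext (by omega))
            | inr b => simp only [gval_inl, gval_inr] at h; omega
          | inr b =>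
            cases y with
            | inl i => simp only [gval_inl, gval_inr] at h; omega
            | inr b' =>
              by_cases hbe : b = b'
              · exact Or.inr (Or.inl (congrArg inr hbe))
              · rcases hlin.total b b' with hs | hs
                · exact Or.inl (Or.inr ⟨h, b, b', rfl, rfl, hs, hbe⟩)
                · exact Or.inr (Or.inr (Or.inr ⟨h.symm, b', b, rfl, rfl, hs, Ne.symm hbe⟩))
        · exact Or.inr (Or.inr (Or.inl h))
      · -- irrefl
        rintro x (h | ⟨-, b, b', rfl, hb', -, hne⟩)
        · exact lt_irrefl _ h
        · exact hne (inr.inj hb')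
      · -- trans
        rintro x y z (h1 | ⟨he1, b, b', rfl, rfl, hs1, hne1⟩)
          (h2 | ⟨he2, c, c', hy2, rfl, hs2, hne2⟩)
        · exact Or.inl (lt_trans h1 h2)
        · exact Or.inl (lt_of_lt_of_le h1 (le_of_eq he2))
        · exact Or.inl (lt_of_le_of_lt (le_of_eq he1) h2)
        · obtain rfl : b' = c := inr.inj hy2
          have hne : b ≠ c' := by
            rintro rfl
            exact hne1 (hlin.antisymm _ _ hs1 hs2)
          exact Or.inr ⟨he1.trans he2, b, c', rfl, rfl, hlin.trans _ _ _ hs1 hs2, hne⟩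
    · -- edges
      intro a b hE
      have := (hchar b a).1 (Prec.A hE)
      exact Or.inl (by simp only [gval_inl, gval_inr]; omega)
    · -- no forbidden configuration
      rintro ⟨a, a', b, b', h1, h2, h3, hE1, hE2, hE3⟩
      have ha'a : a' < a := by
        rcases h1 with h | ⟨-, c, c', hc, -, -⟩
        · simp only [gval_inl] at h
          exact Fin.lt_def.2 (by omega)
        · exact absurd hc (by simp)
      have hab : (a : ℕ) < f b := by
        rcases h2 with h | ⟨-, c, c', hc, -, -⟩
        · simp only [gval_inl, gval_inr] at h; omega
        · exact absurd hc (by simp)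
      have hPab := (hchar b a).2 hab
      have hPb'b : Prec n β E k (inr b') (inr b) := by
        rcases lt_trichotomy a (k b) with h | h | h
        · exact Prec.TB ha'a h hE1 hE3 hE2
        · exact absurd (show E a b by rw [h]; exact (hk b).1) hE3
        · exact keyL hk hPab h hE2
      have hfb : f b' ≤ f b := hmono _ _ hPb'b
      have hsb := hPb _ _ hPb'b
      rcases h3 with h | ⟨he, c, c', hc, hc', hs, hne⟩
      · simp only [gval_inr] at h; omega
      · obtain rfl : c = b := (inr.inj hc).symm
        obtain rfl : c' = b' := (inr.inj hc').symm
        exact hne (hlin.antisymm _ _ hs hsb.1)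
    · -- restriction to A
      intro i j
      constructor
      · rintro (h | ⟨-, c, c', hc, -, -⟩)
        · simp only [gval_inl] at h
          exact Fin.lt_def.2 (by omega)
        · exact absurd hc (by simp)
      · intro h
        exact Or.inl (by simp only [gval_inl]; have := Fin.lt_def.1 h; omega)
end

section
/- The relation ≺° generated by the rule set R' equals S_n; equivalently, every pair c ≺° d admits an increasing forcing sequence, i.e. a derivation by the rules of R' in which the indices of the supports of the successive (TB) and (FB') applications form a nondecreasing sequence. -/
open Sum

/-- The smallest relation containing `base` and closed under (O), (A), (T), and under those
instances of (TB) and (FB') whose support `a_t` satisfies `allowed t`. -/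
inductive Cl (n : ℕ) (β : Type) (E : Fin n → β → Prop) (k : β → Fin n)
    (base : (Fin n ⊕ β) → (Fin n ⊕ β) → Prop) (allowed : Fin n → Prop) :
    (Fin n ⊕ β) → (Fin n ⊕ β) → Prop
  | base : ∀ {x y : Fin n ⊕ β}, base x y → Cl n β E k base allowed x y
  | O : ∀ {i j : Fin n}, i < j → Cl n β E k base allowed (inl i) (inl j)
  | A : ∀ {t : Fin n} {j : β}, E t j → Cl n β E k base allowed (inl t) (inr j)
  | TB : ∀ {s t : Fin n} {h j : β}, allowed t → s < t → t < k j → E s j → ¬ E t j → E t h →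
      Cl n β E k base allowed (inr h) (inr j)
  | FB' : ∀ {t : Fin n} {h j : β}, allowed t → Cl n β E k base allowed (inl t) (inr j) →
      k j < t → E t h → Cl n β E k base allowed (inr h) (inr j)
  | T : ∀ {p q r : Fin n ⊕ β}, Cl n β E k base allowed p q → Cl n β E k base allowed q r →
      Cl n β E k base allowed p r

/-- The relations `S_i`, `0 ≤ i ≤ n`: `S_0` is the smallest relation closed under (O),(A),(T);
`S_i` is the smallest relation containing `S_{i-1}` and closed under (O),(A),(T) and those
instances of (TB) and (FB') whose support is `a_i` (here `a_i` is the element of `Fin n`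
with value `i - 1`). -/
def S (n : ℕ) (β : Type) (E : Fin n → β → Prop) (k : β → Fin n) :
    ℕ → (Fin n ⊕ β) → (Fin n ⊕ β) → Prop
  | 0 => Cl n β E k (fun _ _ => False) (fun _ => False)
  | i + 1 => Cl n β E k (S n β E k i) (fun t => (t : ℕ) = i)


open Sum

section Aux

variable {n : ℕ} {β : Type} {E : Fin n → β → Prop} {k : β → Fin n}

lemma S_mono {m m' : ℕ} (hm : m ≤ m') {x y : Fin n ⊕ β}
    (h : S n β E k m x y) : S n β E k m' x y := by
  induction hm with
  | refl => exact h
  | step _ ih => exact Cl.base ih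

lemma S_O {m : ℕ} {i j : Fin n} (h : i < j) : S n β E k m (inl i) (inl j) := by
  cases m <;> exact Cl.O h

lemma S_A {m : ℕ} {t : Fin n} {j : β} (h : E t j) : S n β E k m (inl t) (inr j) := by
  cases m <;> exact Cl.A h

lemma S_T {m : ℕ} {p q r : Fin n ⊕ β} (h1 : S n β E k m p q) (h2 : S n β E k m q r) :
    S n β E k m p r := by
  cases m <;> exact Cl.T h1 h2

lemma S_TB {s t : Fin n} {h j : β} (hst : s < t) (htk : t < k j) (hE1 : E s j)
    (hE2 : ¬ E t j) (hE3 : E t h) : S n β E k ((t : ℕ) + 1) (inr h) (inr j) :=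
  Cl.TB rfl hst htk hE1 hE2 hE3

lemma S_FB' {t : Fin n} {h j : β} (hp : S n β E k ((t : ℕ) + 1) (inl t) (inr j))
    (hkj : k j < t) (hE : E t h) : S n β E k ((t : ℕ) + 1) (inr h) (inr j) :=
  Cl.FB' rfl hp hkj hE

lemma S_le_k {m : ℕ} (hk : ∀ j : β, E (k j) j ∧ ∀ i : Fin n, E i j → i ≤ k j)
    {t : Fin n} {w : β} (h : t ≤ k w) : S n β E k m (inl t) (inr w) := by
  rcases eq_or_lt_of_le h with heq | hlt
  · rw [heq]; exact S_A (hk w).1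
  · exact S_T (S_O hlt) (S_A (hk w).1)

end Aux
section Key

variable {n : ℕ} {β : Type} {E : Fin n → β → Prop} {k : β → Fin n}

/-- Key reordering lemma: any `Prec'` derivation can be restratified. -/
lemma key (hk : ∀ j : β, E (k j) j ∧ ∀ i : Fin n, E i j → i ≤ k j)
    {c d : Fin n ⊕ β} (h : Prec' n β E k c d) :
    (∀ s : Fin n, ∀ j : β, c = inl s → d = inr j → ∀ t : Fin n, t ≤ s → k j < t →
        S n β E k ((t : ℕ) + 1) (inl t) (inr j)) ∧
    (∀ v j : β, c = inr v → d = inr j → ∀ t : Fin n, k j < t →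
        S n β E k ((t : ℕ) + 1) (inl t) (inr v) →
        S n β E k ((t : ℕ) + 1) (inl t) (inr j)) ∧
    (∀ s s' : Fin n, c = inl s → d = inl s' → s < s') ∧
    (∀ v : β, ∀ s' : Fin n, c = inr v → d = inl s' → False) := by
  induction h with
  | O hij =>
      refine ⟨?_, ?_, ?_, ?_⟩
      · intro s j hc hd; simp at hd
      · intro v j hc hd; simp at hc
      · intro s s' hc hd
        obtain rfl : _ = s := Sum.inl.inj hc
        obtain rfl : _ = s' := Sum.inl.inj hd
        exact hij
      · intro v s' hc hd; simp at hc
  | A hE =>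
      refine ⟨?_, ?_, ?_, ?_⟩
      · intro s j hc hd t hts htk
        obtain rfl : _ = s := Sum.inl.inj hc
        obtain rfl : _ = j := Sum.inr.inj hd
        exact absurd (le_trans hts ((hk _).2 _ hE)) (not_le.mpr htk)
      · intro v j hc hd; simp at hc
      · intro s s' hc hd; simp at hd
      · intro v s' hc hd; simp at hc
  | TB hsu huk hE1 hE2 hE3 =>
      rename_i s0 u h0 j0
      refine ⟨?_, ?_, ?_, ?_⟩
      · intro s j hc hd; simp at hc
      · intro v j hc hd t htk H
        obtain rfl : _ = v := Sum.inr.inj hc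
        obtain rfl : _ = j := Sum.inr.inj hd
        have hut : u < t := lt_trans huk htk
        have hmono : (u : ℕ) + 1 ≤ (t : ℕ) + 1 := Nat.succ_le_succ (le_of_lt hut)
        exact S_T H (S_mono hmono (S_TB hsu huk hE1 hE2 hE3))
      · intro s s' hc hd; simp at hd
      · intro v s' hc hd; simp at hd
  | FB' hp hkj hE ih =>
      rename_i u h0 j0
      refine ⟨?_, ?_, ?_, ?_⟩
      · intro s j hc hd; simp at hc
      · intro v j hc hd t htk H
        obtain rfl : _ = v := Sum.inr.inj hc
        obtain rfl : _ = j := Sum.inr.inj hd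
        rcases le_or_gt t u with htu | hut
        · exact ih.1 u j0 rfl rfl t htu htk
        · have h1 := ih.1 u j0 rfl rfl u le_rfl hkj
          have h2 := S_FB' h1 hkj hE
          have hmono : (u : ℕ) + 1 ≤ (t : ℕ) + 1 := Nat.succ_le_succ (le_of_lt hut)
          exact S_T H (S_mono hmono h2)
      · intro s s' hc hd; simp at hd
      · intro v s' hc hd; simp at hd
  | T h1 h2 ih1 ih2 =>
      rename_i p q r
      refine ⟨?_, ?_, ?_, ?_⟩
      · intro s j hc hd t hts htk
        subst hc; subst hd
        cases q with
        | inl s' =>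
            have hss' : s < s' := ih1.2.2.1 s s' rfl rfl
            exact ih2.1 s' j rfl rfl t (le_of_lt (lt_of_le_of_lt hts hss')) htk
        | inr w =>
            rcases le_or_gt t (k w) with hle | hlt
            · exact ih2.2.1 w j rfl rfl t htk (S_le_k hk hle)
            · exact ih2.2.1 w j rfl rfl t htk (ih1.1 s w rfl rfl t hts hlt)
      · intro v j hc hd t htk H
        subst hc; subst hd
        cases q with
        | inl x => exact (ih1.2.2.2 v x rfl rfl).elim
        | inr x =>
            rcases le_or_gt t (k x) with hle | hlt
            · exact ih2.2.1 x j rfl rfl t htk (S_le_k hk hle)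
            · exact ih2.2.1 x j rfl rfl t htk (ih1.2.1 v x rfl rfl t hlt H)
      · intro s s' hc hd
        subst hc; subst hd
        cases q with
        | inl x => exact lt_trans (ih1.2.2.1 s x rfl rfl) (ih2.2.2.1 x s' rfl rfl)
        | inr w => exact (ih2.2.2.2 w s' rfl rfl).elim
      · intro v s' hc hd
        subst hc; subst hd
        cases q with
        | inl x => exact ih1.2.2.2 v x rfl rfl
        | inr w => exact ih2.2.2.2 w s' rfl rfl

lemma Cl_to_Prec {base : (Fin n ⊕ β) → (Fin n ⊕ β) → Prop} {allowed : Fin n → Prop}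
    (hb : ∀ x y, base x y → Prec' n β E k x y) {x y : Fin n ⊕ β}
    (h : Cl n β E k base allowed x y) : Prec' n β E k x y := by
  induction h with
  | base h => exact hb _ _ h
  | O h => exact Prec'.O h
  | A h => exact Prec'.A h
  | TB _ h1 h2 h3 h4 h5 => exact Prec'.TB h1 h2 h3 h4 h5
  | FB' _ _ h2 h3 ih => exact Prec'.FB' ih h2 h3
  | T _ _ ih1 ih2 => exact Prec'.T ih1 ih2

lemma S_to_Prec : ∀ (m : ℕ) {x y : Fin n ⊕ β}, S n β E k m x y → Prec' n β E k x y := by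
  intro m
  induction m with
  | zero => intro x y h; exact Cl_to_Prec (fun _ _ hf => hf.elim) h
  | succ i ih => intro x y h; exact Cl_to_Prec (fun _ _ hb => ih hb) h

end Key

/-- The relation `≺°` generated by the rule set `R'` equals `S_n`:
every pair `c ≺° d` admits an increasing forcing sequence. -/
theorem stmt9 (n : ℕ) (β : Type) [Fintype β] (E : Fin n → β → Prop) (k : β → Fin n)
    (hk : ∀ j : β, E (k j) j ∧ ∀ i : Fin n, E i j → i ≤ k j)
    (c d : Fin n ⊕ β) :
    Prec' n β E k c d ↔ S n β E k n c d := by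
  constructor
  · intro h
    induction h with
    | O hij => exact S_O hij
    | A hE => exact S_A hE
    | TB hst htk h1 h2 h3 =>
        rename_i s t h j
        exact S_mono (Nat.succ_le_of_lt t.isLt) (S_TB hst htk h1 h2 h3)
    | FB' hp hkj hE ih =>
        rename_i t h j
        have h1 := (key hk hp).1 t j rfl rfl t le_rfl hkj
        exact S_mono (Nat.succ_le_of_lt t.isLt) (S_FB' h1 hkj hE)
    | T h1 h2 ih1 ih2 => exact S_T ih1 ih2
  · intro h
    exact S_to_Prec n h
end

section
/- Let σ_B be a linear order on B. Then G admits a Stick order whose restriction to A is the given order a_1 < … < a_n and whose restriction to B is σ_B if and only if none of the following three configurations occurs: (P1) indices with a_i < a_j < a_k in A and b_p < b_q < b_r in σ_B such that a_i b_q ∈ E, a_j b_q ∉ E, a_j b_r ∈ E and a_k b_p ∈ E; (P2) indices with a_i < a_j < a_k in A and b_p < b_q in σ_B such that a_i b_p ∈ E, a_j b_p ∉ E, a_j b_q ∈ E and a_k b_p ∈ E; (P3) indices with a_i < a_j in A and b_p < b_q < b_r in σ_B such that a_i b_q ∈ E, a_j b_p ∈ E, a_j b_q ∉ E and a_j b_r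 ∈ E. -/
open Sum

/-- Given a linear order `σ_B` on `B`, `G` admits a Stick order with the
given restriction to `A` and restriction `σ_B` to `B` iff none of the ordered
configurations `P1`, `P2`, `P3` occurs. -/
theorem stmt10 (n : ℕ) (β : Type) [Fintype β] (E : Fin n → β → Prop)
    (hE : ∀ b : β, ∃ a : Fin n, E a b)
    (sB : β → β → Prop) (hsB : IsStrictTotalOrder β sB) :
    (∃ r, IsStickOrder n β E r ∧ (∀ i j : Fin n, r (inl i) (inl j) ↔ i < j) ∧
        (∀ p q : β, r (inr p) (inr q) ↔ sB p q)) ↔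
      (¬ ∃ (i j l : Fin n) (p q s : β), i < j ∧ j < l ∧ sB p q ∧ sB q s ∧
          E i q ∧ ¬ E j q ∧ E j s ∧ E l p) ∧
      (¬ ∃ (i j l : Fin n) (p q : β), i < j ∧ j < l ∧ sB p q ∧
          E i p ∧ ¬ E j p ∧ E j q ∧ E l p) ∧
      (¬ ∃ (i j : Fin n) (p q s : β), i < j ∧ sB p q ∧ sB q s ∧
          E i q ∧ E j p ∧ ¬ E j q ∧ E j s) := by
  classical
  have hBtri : ∀ a b, sB a b ∨ a = b ∨ sB b a := fun a b => by
    by_cases h1 : sB a b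
    · exact Or.inl h1
    by_cases h2 : sB b a
    · exact Or.inr (Or.inr h2)
    exact Or.inr (Or.inl (hsB.trichotomous a b h1 h2))
  have hBirr := hsB.toIsStrictOrder.toIrrefl.irrefl
  have hBtrans := hsB.toIsStrictOrder.toIsTrans.trans
  constructor
  · rintro ⟨r, ⟨hsto, hedge, hforb⟩, hA, hB⟩
    have htr : ∀ {x y z}, r x y → r y z → r x z :=
      fun hxy hyz => hsto.toIsStrictOrder.toIsTrans.trans _ _ _ hxy hyz
    refine ⟨?_, ?_, ?_⟩
    · rintro ⟨i, j, l, p, q, s, hij, hjl, hpq, hqs, hiq, hjq, hjs, hlp⟩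
      exact hforb ⟨j, i, q, s, (hA i j).2 hij,
        htr ((hA j l).2 hjl) (htr (hedge l p hlp) ((hB p q).2 hpq)),
        (hB q s).2 hqs, hiq, hjs, hjq⟩
    · rintro ⟨i, j, l, p, q, hij, hjl, hpq, hip, hjp, hjq, hlp⟩
      exact hforb ⟨j, i, p, q, (hA i j).2 hij,
        htr ((hA j l).2 hjl) (hedge l p hlp), (hB p q).2 hpq, hip, hjq, hjp⟩
    · rintro ⟨i, j, p, q, s, hij, hpq, hqs, hiq, hjp, hjq, hjs⟩
      exact hforb ⟨j, i, q, s, (hA i j).2 hij,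
        htr (hedge j p hjp) ((hB p q).2 hpq), (hB q s).2 hqs, hiq, hjs, hjq⟩
  · rintro ⟨h1, h2, h3⟩
    obtain ⟨g, hge, hltg, hmono⟩ : ∃ g : β → ℕ,
        (∀ (c : Fin n) (q b : β), E c q → (sB q b ∨ q = b) → (c : ℕ) < g b) ∧
        (∀ (a : Fin n) (b : β), (a : ℕ) < g b →
          ∃ (c : Fin n) (q : β), E c q ∧ (sB q b ∨ q = b) ∧ (a : ℕ) ≤ (c : ℕ)) ∧
        (∀ p q, sB p q → g p ≤ g q) := by
      refine ⟨fun b => Finset.univ.sup (fun ac : Fin n × β =>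
        if E ac.1 ac.2 ∧ (sB ac.2 b ∨ ac.2 = b) then (ac.1 : ℕ) + 1 else 0), ?_, ?_, ?_⟩
      · intro c q b hE' hqb
        have h := Finset.le_sup (f := fun ac : Fin n × β =>
          if E ac.1 ac.2 ∧ (sB ac.2 b ∨ ac.2 = b) then (ac.1 : ℕ) + 1 else 0)
          (Finset.mem_univ (c, q))
        simp only [if_pos (show E (c, q).1 (c, q).2 ∧ (sB (c, q).2 b ∨ (c, q).2 = b)
          from ⟨hE', hqb⟩)] at h
        exact lt_of_lt_of_le (Nat.lt_succ_self _) h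
      · intro a b h
        obtain ⟨⟨c, q⟩, -, hlt'⟩ := Finset.lt_sup_iff.mp h
        by_cases hc : E (c, q).1 (c, q).2 ∧ (sB (c, q).2 b ∨ (c, q).2 = b)
        · simp only [if_pos hc] at hlt'
          exact ⟨c, q, hc.1, hc.2, by omega⟩
        · simp only [if_neg hc] at hlt'
          omega
      · intro p q hpq
        refine Finset.sup_mono_fun ?_
        intro ac _
        by_cases hc : E ac.1 ac.2 ∧ (sB ac.2 p ∨ ac.2 = p)
        · simp only [if_pos hc, if_pos (show E ac.1 ac.2 ∧ (sB ac.2 q ∨ ac.2 = q) from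
            ⟨hc.1, Or.inl (hc.2.elim (fun h => hBtrans _ _ _ h hpq) (fun h => h ▸ hpq))⟩)]
          exact le_refl _
        · simp only [if_neg hc]
          exact Nat.zero_le _
    refine ⟨fun x y =>
      match x, y with
      | inl a, inl a' => a < a'
      | inl a, inr b => (a : ℕ) < g b
      | inr b, inl a => g b ≤ (a : ℕ)
      | inr b, inr b' => sB b b', ⟨?_, ?_, ?_⟩, fun i j => Iff.rfl, fun p q => Iff.rfl⟩
    · -- strict total order
      refine { trichotomous := ?_, irrefl := ?_, trans := ?_ }
      · intro x y hxy hyx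
        refine ((?_ : _ ∨ x = y ∨ _).resolve_left hxy).resolve_right hyx
        rcases x with a | b <;> rcases y with a' | b'
        · rcases lt_trichotomy a a' with h | h | h
          · exact Or.inl h
          · exact Or.inr (Or.inl (by rw [h]))
          · exact Or.inr (Or.inr h)
        · rcases Nat.lt_or_ge (a : ℕ) (g b') with h | h
          · exact Or.inl h
          · exact Or.inr (Or.inr h)
        · rcases Nat.lt_or_ge (a' : ℕ) (g b) with h | h
          · exact Or.inr (Or.inr h)
          · exact Or.inl h
        · rcases hBtri b b' with h | h | h
          · exact Or.inl h
          · exact Or.inr (Or.inl (by rw [h]))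
          · exact Or.inr (Or.inr h)
      · intro x
        rcases x with a | b
        · exact lt_irrefl a
        · exact hBirr b
      · intro x y z hxy hyz
        rcases x with a | b <;> rcases y with a' | b' <;> rcases z with a'' | b''
        · exact lt_trans hxy hyz
        · exact lt_trans (show (a : ℕ) < (a' : ℕ) from hxy)
            (show (a' : ℕ) < g b'' from hyz)
        · exact show (a : ℕ) < (a'' : ℕ) from lt_of_lt_of_le
            (show (a : ℕ) < g b' from hxy) (show g b' ≤ (a'' : ℕ) from hyz)
        · exact lt_of_lt_of_le (show (a : ℕ) < g b' from hxy)
            (hmono _ _ (show sB b' b'' from hyz))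
        · exact le_trans (show g b ≤ (a' : ℕ) from hxy)
            (le_of_lt (show (a' : ℕ) < (a'' : ℕ) from hyz))
        · -- g b ≤ a', a' < g b'' ⊢ sB b b''
          rcases hBtri b b'' with h | h | h
          · exact h
          · exact absurd (lt_of_le_of_lt (show g b ≤ (a' : ℕ) from hxy)
              (show (a' : ℕ) < g b'' from hyz)) (by rw [h]; exact lt_irrefl _)
          · exact absurd (hmono _ _ h) (Nat.not_le.mpr
              (lt_of_le_of_lt (show g b ≤ (a' : ℕ) from hxy)
                (show (a' : ℕ) < g b'' from hyz)))
        · exact le_trans (hmono _ _ (show sB b b' from hxy))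
            (show g b' ≤ (a'' : ℕ) from hyz)
        · exact hBtrans _ _ _ hxy hyz
    · -- edges
      intro a b hab
      exact hge a b b hab (Or.inr rfl)
    · -- no forbidden configuration
      rintro ⟨a, a', b, b', haa, hab, hbb, hEa'b, hEab', hEab⟩
      obtain ⟨c, q, hEcq, hqb, hac⟩ := hltg a b hab
      rcases hqb with hqb | rfl
      · rcases eq_or_lt_of_le hac with hac' | hac'
        · have hac'' : a = c := Fin.val_injective hac'
          subst hac''
          exact h3 ⟨a', a, q, b, b', haa, hqb, hbb, hEa'b, hEcq, hEab, hEab'⟩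
        · exact h1 ⟨a', a, c, q, b, b', haa, Fin.lt_def.mpr hac', hqb, hbb,
            hEa'b, hEab, hEab', hEcq⟩
      · have hac' : (a : ℕ) < (c : ℕ) := by
          rcases eq_or_lt_of_le hac with h | h
          · exact absurd (Fin.val_injective h ▸ hEcq) hEab
          · exact h
        exact h2 ⟨a', a, c, q, b', haa, Fin.lt_def.mpr hac', hbb,
          hEa'b, hEab, hEab', hEcq⟩
end

section
/- Let G be an A-Stick N-overlap graph and ≺^c a canonical order for G. If b_t ≺^c b_s for b_t, b_s ∈ B, then b_t ≺° b_s or 1_t < 1_s. -/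
open Sum

/-- A canonical order for `G` (with `m j = max {i | a_i ≺° b_j}` given as a parameter):
a linear (strict total) order on `A ∪ B` extending `≺°` in which every `b_j` is
left-optimal, i.e. `a_{m_j} ≺ b_j` and `b_j ≺ a_{m_j + 1}` whenever `m_j < n`. -/
def IsCanonicalOrder (n : ℕ) (β : Type) (E : Fin n → β → Prop) (k : β → Fin n)
    (m : β → Fin n) (r : (Fin n ⊕ β) → (Fin n ⊕ β) → Prop) : Prop :=
  IsStrictTotalOrder (Fin n ⊕ β) r ∧
  (∀ c d : Fin n ⊕ β, Prec n β E k c d → r c d) ∧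
  ∀ j : β, r (inl (m j)) (inr j) ∧
    ∀ hlt : (m j : ℕ) + 1 < n, r (inr j) (inl ⟨(m j : ℕ) + 1, hlt⟩)
/-- `G` is an N-overlap graph: for all distinct `b_s, b_t ∈ B`, neither `N(b_s) ⊆ N(b_t)`
nor `N(b_t) ⊆ N(b_s)`. -/
def NOverlap (n : ℕ) (β : Type) (E : Fin n → β → Prop) : Prop :=
  ∀ s t : β, s ≠ t → ¬ ∀ a : Fin n, E a s → E a t

/-- Anything `≺°`-below an `A`-vertex is an `A`-vertex with smaller index. -/
lemma prec_to_inl {n : ℕ} {β : Type} {E : Fin n → β → Prop} {k : β → Fin n} :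
    ∀ {c d : Fin n ⊕ β}, Prec n β E k c d → ∀ x : Fin n, d = inl x →
      ∃ i : Fin n, c = inl i ∧ i < x := by
  intro c d h
  induction h with
  | @O i j hij =>
    intro x hx
    refine ⟨i, rfl, ?_⟩
    injection hx with hx; exact hx ▸ hij
  | A _ => intro x hx; simp at hx
  | TB _ _ _ _ _ => intro x hx; simp at hx
  | FB _ _ _ _ ih => intro x hx; simp at hx
  | T h1 h2 ih1 ih2 =>
    intro x hx
    obtain ⟨y, rfl, hyx⟩ := ih2 x hx
    obtain ⟨i, rfl, hiy⟩ := ih1 y rfl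
    exact ⟨i, rfl, hiy.trans hyx⟩

/-- If `a_i ≺° b_j` with `i > k_j`, there is `w` with `b_w ≺° b_j` and `i ≤ k_w`. -/
lemma prec_high_left {n : ℕ} {β : Type} {E : Fin n → β → Prop} {k : β → Fin n}
    (hk : ∀ j : β, E (k j) j ∧ ∀ i : Fin n, E i j → i ≤ k j) :
    ∀ {c d : Fin n ⊕ β}, Prec n β E k c d → ∀ (i : Fin n) (j : β),
      c = inl i → d = inr j → k j < i →
      ∃ w : β, Prec n β E k (inr w) (inr j) ∧ i ≤ k w := by
  intro c d h
  induction h with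
  | O _ => intro i j _ hd _; simp at hd
  | @A t j' hE =>
    intro i j hc hd hkji
    injection hc with hc; injection hd with hd
    exact absurd ((hk j).2 i (hc ▸ hd ▸ hE)) (not_le.2 hkji)
  | TB _ _ _ _ _ => intro i j hc _ _; simp at hc
  | FB _ _ _ _ ih => intro i j hc _ _; simp at hc
  | @T c q d h1 h2 ih1 ih2 =>
    intro i j hc hd hkji
    subst hc; subst hd
    cases q with
    | inl x =>
      obtain ⟨i', hi', hix⟩ := prec_to_inl h1 x rfl
      injection hi' with hi'; subst hi'
      obtain ⟨w, hw, hxw⟩ := ih2 x j rfl rfl (hkji.trans hix)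
      exact ⟨w, hw, le_of_lt (lt_of_lt_of_le hix hxw)⟩
    | inr w0 =>
      by_cases hle : i ≤ k w0
      · exact ⟨w0, h2, hle⟩
      · obtain ⟨w, hw, hiw⟩ := ih1 i w0 rfl rfl (not_le.1 hle)
        exact ⟨w, Prec.T hw h2, hiw⟩

/-- Key inductive lemma: no `w` with `b_w ≺°`-below-or-equal-to `b_s` chain,
`1_w > k_t`, landing on `j` with `1_j ≤ k_t`, unless `b_t ≺° b_s`. -/
lemma prec_main_s12 {n : ℕ} {β : Type} {E : Fin n → β → Prop} {k : β → Fin n}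
    (hk : ∀ j : β, E (k j) j ∧ ∀ i : Fin n, E i j → i ≤ k j)
    (one : β → Fin n)
    (hone : ∀ j : β, E (one j) j ∧ ∀ i : Fin n, E i j → one j ≤ i)
    (t s : β)
    (H1 : ¬ Prec n β E k (inr t) (inr s)) (hst : k s < k t) :
    ∀ {c d : Fin n ⊕ β}, Prec n β E k c d → ∀ (w j : β),
      c = inr w → d = inr j → (j = s ∨ Prec n β E k (inr j) (inr s)) →
      k t < one w → one j ≤ k t → False := by
  have toS : ∀ {x j : β}, (j = s ∨ Prec n β E k (inr j) (inr s)) →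
      Prec n β E k (inr x) (inr j) → Prec n β E k (inr x) (inr s) := by
    rintro x j (rfl | hj) hx
    · exact hx
    · exact Prec.T hx hj
  intro c d h
  induction h with
  | O _ => intro w j hc _ _ _ _; simp at hc
  | A _ => intro w j hc _ _ _ _; simp at hc
  | @TB s' t' h' j' h1 h2 h3 h4 h5 =>
    intro w j hc hd J hw hj
    injection hc with hc; injection hd with hd
    rw [hc] at h5
    rw [hd] at h2 h3 h4
    -- t' is a neighbor of w, so k t < one w ≤ t' < k j
    have htkt : k t < t' := lt_of_lt_of_le hw ((hone w).2 t' h5)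
    have hktkj : k t < k j := htkt.trans h2
    by_cases hEj : E (k t) j
    · have hjs : j ≠ s :=
        fun he => absurd ((hk s).2 (k t) (he ▸ hEj)) (not_le.2 hst)
      have hjps : Prec n β E k (inr j) (inr s) := J.resolve_left hjs
      exact H1 (Prec.FB hjps hst hEj (hk t).1)
    · have honej : one j < k t :=
        lt_of_le_of_ne hj (fun he => hEj (he ▸ (hone j).1))
      have htj : Prec n β E k (inr t) (inr j) :=
        Prec.TB honej hktkj (hone j).1 hEj (hk t).1
      exact H1 (toS J htj)
  | @FB t1 w1 h' j' h1 h2 h3 h4 ih =>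
    intro w j hc hd J hw hj
    injection hc with hc; injection hd with hd
    rw [hd] at h1 h2 ih
    rw [hc] at h4
    by_cases hw1 : k t < one w1
    · exact ih w1 j rfl rfl J hw1 hj
    · have hw1s : Prec n β E k (inr w1) (inr s) := toS J h1
      by_cases hEw1 : E (k t) w1
      · exact H1 (Prec.FB hw1s hst hEw1 (hk t).1)
      · have honew1 : one w1 < k t :=
          lt_of_le_of_ne (not_lt.1 hw1) (fun he => hEw1 (he ▸ (hone w1).1))
        have ht1 : k t < t1 := lt_of_lt_of_le hw ((hone w).2 t1 h4)
        have hktkw1 : k t < k w1 := lt_of_lt_of_le ht1 ((hk w1).2 t1 h3)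
        have htw1 : Prec n β E k (inr t) (inr w1) :=
          Prec.TB honew1 hktkw1 (hone w1).1 hEw1 (hk t).1
        exact H1 (Prec.T htw1 hw1s)
  | @T c q d h1 h2 ih1 ih2 =>
    intro w j hc hd J hw hj
    subst hc; subst hd
    cases q with
    | inl x =>
      obtain ⟨i, hi, _⟩ := prec_to_inl h1 x rfl
      simp at hi
    | inr w1 =>
      by_cases hw1 : k t < one w1
      · exact ih2 w1 j rfl rfl J hw1 hj
      · exact ih1 w w1 rfl rfl (Or.inr (toS J h2)) hw (not_lt.1 hw1)

/-- Let `G` be an A-Stick N-overlap graph and `≺^c` a canonical order for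
`G`. If `b_t ≺^c b_s` then `b_t ≺° b_s` or `1_t < 1_s`. -/
theorem stmt12 (n : ℕ) (β : Type) [Fintype β] (E : Fin n → β → Prop) (k : β → Fin n)
    (hk : ∀ j : β, E (k j) j ∧ ∀ i : Fin n, E i j → i ≤ k j)
    (one : β → Fin n)
    (hone : ∀ j : β, E (one j) j ∧ ∀ i : Fin n, E i j → one j ≤ i)
    (m : β → Fin n)
    (hm : ∀ j : β, Prec n β E k (inl (m j)) (inr j) ∧
      ∀ i : Fin n, Prec n β E k (inl i) (inr j) → i ≤ m j)
    (hA : ∃ r, IsAStickOrder n β E r)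
    (hN : NOverlap n β E)
    (rc : (Fin n ⊕ β) → (Fin n ⊕ β) → Prop)
    (hrc : IsCanonicalOrder n β E k m rc)
    (t s : β) (hts : rc (inr t) (inr s)) :
    Prec n β E k (inr t) (inr s) ∨ one t < one s := by
  by_contra hcon
  push_neg at hcon
  obtain ⟨H1, Hle⟩ := hcon
  haveI hsto : IsStrictTotalOrder (Fin n ⊕ β) rc := hrc.1
  have hirr : ∀ x : Fin n ⊕ β, ¬ rc x x := fun x => irrefl_of rc x
  have htrans : ∀ x y z : Fin n ⊕ β, rc x y → rc y z → rc x z :=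
    fun x y z => trans_of rc
  have hne : t ≠ s := by
    rintro rfl; exact hirr _ hts
  -- rc restricted to A is the natural order
  have rc_inl : ∀ i j : Fin n, rc (inl i) (inl j) → i < j := by
    intro i j h
    rcases lt_trichotomy i j with h' | h' | h'
    · exact h'
    · subst h'; exact absurd h (hirr _)
    · exact absurd (htrans _ _ _ h (hrc.2.1 _ _ (Prec.O h'))) (hirr _)
  -- m t ≤ m s
  have hmts : m t ≤ m s := by
    by_cases hlt : (m s : ℕ) + 1 < n
    · have h1 : rc (inl (m t)) (inr t) := (hrc.2.2 t).1
      have h2 : rc (inr s) (inl ⟨(m s : ℕ) + 1, hlt⟩) := (hrc.2.2 s).2 hlt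
      have h3 : rc (inl (m t)) (inl ⟨(m s : ℕ) + 1, hlt⟩) :=
        htrans _ _ _ (htrans _ _ _ h1 hts) h2
      have h4 := rc_inl _ _ h3
      rw [Fin.lt_def] at h4
      rw [Fin.le_def]
      simpa using Nat.lt_succ_iff.1 h4
    · have h1 := (m t).isLt
      rw [Fin.le_def]
      omega
  have hktmt : k t ≤ m t := (hm t).2 (k t) (Prec.A (hk t).1)
  -- a neighbor of t that is not a neighbor of s
  have hNex := hN t s hne
  push_neg at hNex
  obtain ⟨u, hut, hus⟩ := hNex
  -- k s < k t
  have hu1 : one s ≤ u := le_trans Hle ((hone t).2 u hut)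
  have hu2 : one s < u := lt_of_le_of_ne hu1 (fun he => hus (he ▸ (hone s).1))
  have huks : k s < u := by
    rcases lt_trichotomy u (k s) with h' | h' | h'
    · exact absurd (Prec.TB hu2 h' (hone s).1 hus hut) H1
    · exact absurd ((hk s).1) (h' ▸ hus)
    · exact h'
  have hst : k s < k t := lt_of_lt_of_le huks ((hk t).2 u hut)
  -- k s < m s, so get w above
  have hksms : k s < m s := lt_of_lt_of_le hst (le_trans hktmt hmts)
  obtain ⟨w, hws, hmskw⟩ := prec_high_left hk ((hm s).1) (m s) s rfl rfl hksms
  have hktkw : k t ≤ k w := le_trans (le_trans hktmt hmts) hmskw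
  have honew : k t < one w := by
    by_cases hEw : E (k t) w
    · exact absurd (Prec.FB hws hst hEw (hk t).1) H1
    · by_contra hno
      push_neg at hno
      have h1 : one w < k t := lt_of_le_of_ne hno (fun he => hEw (he ▸ (hone w).1))
      have h2 : k t < k w := lt_of_le_of_ne hktkw (fun he => hEw (by rw [he]; exact (hk w).1))
      exact H1 (Prec.T (Prec.TB h1 h2 (hone w).1 hEw (hk t).1) hws)
  have hones : one s ≤ k t := le_of_lt (lt_of_le_of_lt ((hk s).2 (one s) (hone s).1) hst)
  exact prec_main_s12 hk one hone t s H1 hst hws w s rfl rfl (Or.inl rfl) honew hones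
end

section
/- Let G be an A-Stick N-overlap graph with no isolated vertices, ≺ an A-Stick order of G, and b_t ≺ b_s two vertices of B that are consecutive among B with respect to ≺. Then the swap of b_t and b_s is good if and only if 1_s ≤ 1_t and b_t ≺° b_s does not hold. -/
open Sum

/-- The rank of a vertex in an order `r`: the number of vertices strictly preceding it
(positions in the steady representation). -/
noncomputable def rankOf (n : ℕ) (β : Type) (r : (Fin n ⊕ β) → (Fin n ⊕ β) → Prop)
    (v : Fin n ⊕ β) : ℕ :=
  Set.ncard {w : Fin n ⊕ β | r w v}

open Classical in
/-- The total segment length of the steady Stick representation with origin order `r`, all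
segments as short as possible: the segment of `b ∈ B` has length `rank b - rank a_{1_b}`,
and the segment of `a ∈ A` has length `rank b* - rank a` where `b*` is the `r`-largest
neighbor of `a` (its rank is the sup of the ranks of the neighbors of `a`). -/
noncomputable def lengthOf (n : ℕ) (β : Type) [Fintype β] (E : Fin n → β → Prop)
    (one : β → Fin n) (r : (Fin n ⊕ β) → (Fin n ⊕ β) → Prop) : ℕ :=
  (∑ b : β, (rankOf n β r (inr b) - rankOf n β r (inl (one b)))) +
  ∑ a : Fin n,
    ((Finset.univ.filter (fun b : β => E a b)).sup (fun b => rankOf n β r (inr b))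
      - rankOf n β r (inl a))
/-- The order obtained from `r` by moving `b_s` immediately before `a_v`, keeping all other
relative positions unchanged. -/
def moveBefore (n : ℕ) (β : Type) (r : (Fin n ⊕ β) → (Fin n ⊕ β) → Prop)
    (s : β) (v : Fin n) : (Fin n ⊕ β) → (Fin n ⊕ β) → Prop :=
  fun x y =>
    (x = inr s ∧ y ≠ inr s ∧ (y = inl v ∨ r (inl v) y)) ∨
    (x ≠ inr s ∧ y = inr s ∧ r x (inl v)) ∨
    (x ≠ inr s ∧ y ≠ inr s ∧ r x y)

/-- An alternate chain (for the pair with right element `b_s`, starting at `a_c`):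
a maximal sequence `a_{x_1} = a_c, b_{y_1}, a_{x_2}, …, a_{x_l}, b_{y_l}, a_{x_{l+1}}` with
`a_{x_g} b_{y_g} ∈ E`, `a_{x_{g+1}} b_{y_g} ∈ E`, `x_{g+1} < x_g` for `1 ≤ g ≤ l`, and
`a_{x_g} b_s ∉ E` for `1 ≤ g ≤ l + 1`. -/
def IsAltChain (n : ℕ) (β : Type) (E : Fin n → β → Prop) (s : β) (c : Fin n)
    (l : ℕ) (x : ℕ → Fin n) (y : ℕ → β) : Prop :=
  x 1 = c ∧
  (∀ g : ℕ, 1 ≤ g → g ≤ l → E (x g) (y g) ∧ E (x (g + 1)) (y g) ∧ x (g + 1) < x g) ∧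
  (∀ g : ℕ, 1 ≤ g → g ≤ l + 1 → ¬ E (x g) s) ∧
  ¬ ∃ (b : β) (a : Fin n), E (x (l + 1)) b ∧ E a b ∧ a < x (l + 1) ∧ ¬ E a s

/-- `a_v` is the limit `v_st` of `b_s` and `b_t`: with `c = min {i | a_i b_t ∈ E, a_i b_s ∉ E}`,
`v` is the minimum over all alternate chains of the index of the last chain element. -/
def IsLimit (n : ℕ) (β : Type) (E : Fin n → β → Prop) (t s : β) (v : Fin n) : Prop :=
  ∃ c : Fin n, (E c t ∧ ¬ E c s ∧ ∀ i : Fin n, E i t → ¬ E i s → c ≤ i) ∧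
    (∃ (l : ℕ) (x : ℕ → Fin n) (y : ℕ → β), IsAltChain n β E s c l x y ∧ x (l + 1) = v) ∧
    (∀ (l : ℕ) (x : ℕ → Fin n) (y : ℕ → β), IsAltChain n β E s c l x y → v ≤ x (l + 1))

/-- The swap of `b_t` and `b_s` (in the order `r`) is good: moving `b_s` immediately before
the limit `a_{v_st}` yields again an A-Stick order whose steady shortest representation has
strictly smaller total segment length. -/
def GoodSwap (n : ℕ) (β : Type) [Fintype β] (E : Fin n → β → Prop) (one : β → Fin n)
    (r : (Fin n ⊕ β) → (Fin n ⊕ β) → Prop) (t s : β) : Prop :=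
  ∃ v : Fin n, IsLimit n β E t s v ∧
    IsAStickOrder n β E (moveBefore n β r s v) ∧
    lengthOf n β E one (moveBefore n β r s v) < lengthOf n β E one r


section Aux

variable {n : ℕ} {β : Type} {E : Fin n → β → Prop}

/-- Soundness of `≺°` with respect to any A-Stick order. -/
theorem prec_sound (k : β → Fin n) (hk : ∀ j : β, E (k j) j ∧ ∀ i : Fin n, E i j → i ≤ k j)
    (ρ : (Fin n ⊕ β) → (Fin n ⊕ β) → Prop) (hρ : IsAStickOrder n β E ρ) :
    ∀ p q, Prec n β E k p q → ρ p q := by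
  obtain ⟨⟨hSTO, hedge, hforb⟩, hA⟩ := hρ
  have htrans : ∀ {x y z}, ρ x y → ρ y z → ρ x z := fun h1 h2 => hSTO.trans _ _ _ h1 h2
  intro p q hpq
  induction hpq with
  | @O i j h => exact (hA i j).2 h
  | @A a j h => exact hedge a j h
  | @TB a b h j hab hbk haj hbj hbh =>
      by_contra hc
      have hne : (inr h : Fin n ⊕ β) ≠ inr j := by
        intro he; exact hbj (by rwa [inr.injEq] at he ▸ hbh) 
      rcases (@trichotomous _ _ hSTO.toTrichotomous) (inr h) (inr j) with h1 | h1 | h1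
      · exact hc h1
      · cases h1; exact hbj hbh
      · exact hforb ⟨b, a, j, h, (hA a b).2 hab,
          htrans ((hA b (k j)).2 hbk) (hedge _ _ (hk j).1), h1, haj, hbh, hbj⟩
  | @FB a w h j hwj hka haw hah ih =>
      by_contra hc
      have hanj : ¬ E a j := fun he => absurd ((hk j).2 a he) (not_le.mpr hka)
      rcases (@trichotomous _ _ hSTO.toTrichotomous) (inr h) (inr j) with h1 | h1 | h1
      · exact hc h1
      · cases h1; exact hanj hah
      · exact hforb ⟨a, k j, j, h, (hA (k j) a).2 hka,
          htrans (hedge a w haw) ih, h1, (hk j).1, hah, hanj⟩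
  | T h1 h2 ih1 ih2 => exact htrans ih1 ih2


theorem moveBefore_sto {r : (Fin n ⊕ β) → (Fin n ⊕ β) → Prop}
    (hSTO : IsStrictTotalOrder (Fin n ⊕ β) r) (s : β) (v : Fin n) :
    IsStrictTotalOrder (Fin n ⊕ β) (moveBefore n β r s v) := by
  have htrans : ∀ {x y z}, r x y → r y z → r x z := fun h1 h2 => hSTO.trans _ _ _ h1 h2
  have hirr : ∀ x, ¬ r x x := fun x => hSTO.irrefl x
  refine { trichotomous := ?_, irrefl := ?_, trans := ?_ }
  · -- trichotomous
    intro x y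
    suffices H : moveBefore n β r s v x y ∨ x = y ∨ moveBefore n β r s v y x from
      fun hxy hyx => H.elim (fun h => absurd h hxy) (fun h => h.elim id (fun h => absurd h hyx))
    by_cases hx : x = inr s
    · by_cases hy : y = inr s
      · subst hx hy; right; left; rfl
      · subst hx
        rcases (@trichotomous _ _ hSTO.toTrichotomous) y (inl v) with h1 | h1 | h1
        · right; right; exact Or.inr (Or.inl ⟨hy, rfl, h1⟩)
        · left; exact Or.inl ⟨rfl, hy, Or.inl h1⟩
        · left; exact Or.inl ⟨rfl, hy, Or.inr h1⟩
    · by_cases hy : y = inr s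
      · subst hy
        rcases (@trichotomous _ _ hSTO.toTrichotomous) x (inl v) with h1 | h1 | h1
        · left; exact Or.inr (Or.inl ⟨hx, rfl, h1⟩)
        · right; right; exact Or.inl ⟨rfl, hx, Or.inl h1⟩
        · right; right; exact Or.inl ⟨rfl, hx, Or.inr h1⟩
      · rcases (@trichotomous _ _ hSTO.toTrichotomous) x y with h1 | h1 | h1
        · left; exact Or.inr (Or.inr ⟨hx, hy, h1⟩)
        · right; left; exact h1
        · right; right; exact Or.inr (Or.inr ⟨hy, hx, h1⟩)
  · -- irrefl
    intro x hx
    rcases hx with ⟨h1, h2, _⟩ | ⟨h1, h2, _⟩ | ⟨_, _, h3⟩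
    · exact h2 h1
    · exact h1 h2
    · exact hirr x h3
  · -- trans
    intro x y z hxy hyz
    rcases hxy with ⟨hx, hy, h1⟩ | ⟨hx, hy, h1⟩ | ⟨hx, hy, h1⟩
    · -- x = inr s
      rcases hyz with ⟨hy', _, _⟩ | ⟨_, hz, h2⟩ | ⟨_, hz, h2⟩
      · exact absurd hy' hy
      · -- z = inr s : contradiction
        exfalso
        rcases h1 with h1 | h1
        · exact hirr _ (h1 ▸ h2)
        · exact hirr _ (htrans h2 h1)
      · left
        refine ⟨hx, hz, ?_⟩
        rcases h1 with h1 | h1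
        · exact Or.inr (h1 ▸ h2)
        · exact Or.inr (htrans h1 h2)
    · -- y = inr s
      rcases hyz with ⟨_, hz, h2⟩ | ⟨hy', _, _⟩ | ⟨hy', _, _⟩
      · right; right
        refine ⟨hx, hz, ?_⟩
        rcases h2 with h2 | h2
        · exact h2 ▸ h1
        · exact htrans h1 h2
      · exact absurd hy hy'
      · exact absurd hy hy'
    · -- both ≠ s
      rcases hyz with ⟨hy', _, _⟩ | ⟨_, hz, h2⟩ | ⟨_, hz, h2⟩
      · exact absurd hy' hy
      · right; left; exact ⟨hx, hz, htrans h1 h2⟩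
      · right; right; exact ⟨hx, hz, htrans h1 h2⟩


theorem altChain_anti {l : ℕ} {x : ℕ → Fin n} {y : ℕ → β}
    (h2 : ∀ g : ℕ, 1 ≤ g → g ≤ l → E (x g) (y g) ∧ E (x (g + 1)) (y g) ∧ x (g + 1) < x g) :
    ∀ g g' : ℕ, 1 ≤ g → g ≤ g' → g' ≤ l + 1 → x g' ≤ x g := by
  intro g g' hg hgg' hg'
  induction g' with
  | zero => omega
  | succ m ih =>
    rcases Nat.lt_or_ge g (m + 1) with hlt | hge
    · have hm : 1 ≤ m := by omega
      have := (h2 m hm (by omega)).2.2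
      exact le_trans this.le (ih (by omega) (by omega))
    · have : g = m + 1 := by omega
      exact this ▸ le_refl _


theorem exists_maximal_chain (s : β) (c : Fin n) :
    ∀ (N l : ℕ) (x : ℕ → Fin n) (y : ℕ → β),
      (x (l + 1) : ℕ) ≤ N →
      x 1 = c →
      (∀ g : ℕ, 1 ≤ g → g ≤ l → E (x g) (y g) ∧ E (x (g + 1)) (y g) ∧ x (g + 1) < x g) →
      (∀ g : ℕ, 1 ≤ g → g ≤ l + 1 → ¬ E (x g) s) →
      ∃ (l' : ℕ) (x' : ℕ → Fin n) (y' : ℕ → β),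
        IsAltChain n β E s c l' x' y' ∧ x' (l' + 1) ≤ x (l + 1) := by
  intro N
  induction N with
  | zero =>
    intro l x y hN h1 h2 h3
    by_cases hmax : ∃ (b : β) (a : Fin n), E (x (l + 1)) b ∧ E a b ∧ a < x (l + 1) ∧ ¬ E a s
    · obtain ⟨b, a, _, _, hlt, _⟩ := hmax
      exact absurd hlt (by rw [Fin.lt_def]; omega)
    · exact ⟨l, x, y, ⟨h1, h2, h3, hmax⟩, le_rfl⟩
  | succ m ih =>
    intro l x y hN h1 h2 h3
    by_cases hmax : ∃ (b : β) (a : Fin n), E (x (l + 1)) b ∧ E a b ∧ a < x (l + 1) ∧ ¬ E a s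
    · obtain ⟨b, a, hb1, hb2, hlt, ha4⟩ := hmax
      set x' : ℕ → Fin n := Function.update x (l + 2) a with hx'
      set y' : ℕ → β := Function.update y (l + 1) b with hy'
      have hx'v : ∀ g : ℕ, g ≠ l + 2 → x' g = x g := fun g hg => Function.update_of_ne hg _ _
      have hx'l : x' (l + 2) = a := Function.update_self _ _ _
      have hy'v : ∀ g : ℕ, g ≠ l + 1 → y' g = y g := fun g hg => Function.update_of_ne hg _ _
      have hy'l : y' (l + 1) = b := Function.update_self _ _ _
      obtain ⟨l', x'', y'', hch, hle⟩ := ih (l + 1) x' y'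
        (by rw [show l + 1 + 1 = l + 2 from rfl, hx'l]
            have := hlt; rw [Fin.lt_def] at this; omega)
        (by rw [hx'v 1 (by omega)]; exact h1)
        (by intro g hg1 hg2
            rcases Nat.lt_or_ge g (l + 1) with hg | hg
            · rw [hx'v g (by omega), hx'v (g + 1) (by omega), hy'v g (by omega)]
              exact h2 g hg1 (by omega)
            · have hgeq : g = l + 1 := by omega
              subst hgeq
              rw [hx'v (l + 1) (by omega), hy'l, show l + 1 + 1 = l + 2 from rfl, hx'l]
              exact ⟨hb1, hb2, hlt⟩)
        (by intro g hg1 hg2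
            rcases Nat.lt_or_ge g (l + 2) with hg | hg
            · rw [hx'v g (by omega)]; exact h3 g hg1 (by omega)
            · have hgeq : g = l + 2 := by omega
              subst hgeq; rw [hx'l]; exact ha4)
      refine ⟨l', x'', y'', hch, le_trans hle ?_⟩
      rw [show l + 1 + 1 = l + 2 from rfl, hx'l]
      exact le_of_lt hlt
    · exact ⟨l, x, y, ⟨h1, h2, h3, hmax⟩, le_rfl⟩

end Aux

/-- Let `G` be an A-Stick N-overlap graph with no isolated vertices, `≺` an
A-Stick order of `G`, and `b_t ≺ b_s` consecutive among `B` with respect to `≺`. Then the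
swap of `b_t` and `b_s` is good iff `1_s ≤ 1_t` and `b_t ≺° b_s` does not hold. -/
theorem stmt13 (n : ℕ) (β : Type) [Fintype β] (E : Fin n → β → Prop) (k : β → Fin n)
    (hk : ∀ j : β, E (k j) j ∧ ∀ i : Fin n, E i j → i ≤ k j)
    (one : β → Fin n)
    (hone : ∀ j : β, E (one j) j ∧ ∀ i : Fin n, E i j → one j ≤ i)
    (hN : NOverlap n β E)
    (hnoiso : ∀ a : Fin n, ∃ b : β, E a b)
    (r : (Fin n ⊕ β) → (Fin n ⊕ β) → Prop)
    (hr : IsAStickOrder n β E r)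
    (t s : β) (hts : r (inr t) (inr s))
    (hconsec : ¬ ∃ u : β, r (inr t) (inr u) ∧ r (inr u) (inr s)) :
    GoodSwap n β E one r t s ↔
      (one s ≤ one t ∧ ¬ Prec n β E k (inr t) (inr s)) := by
  obtain ⟨⟨hSTO, hedge, hforb⟩, hA⟩ := hr
  have htrans : ∀ {x y z}, r x y → r y z → r x z := fun h1 h2 => hSTO.trans _ _ _ h1 h2
  have hirr : ∀ x, ¬ r x x := fun x => hSTO.irrefl x
  have htns : t ≠ s := fun h => hirr _ (h ▸ hts)
  constructor
  · rintro ⟨v, hlim, hr', hlen⟩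
    obtain ⟨c, ⟨hct, hcs, hcmin⟩, ⟨l, x, y, hchain, hxv⟩, hminv⟩ := hlim
    have hvc : v ≤ c := by
      have := altChain_anti (E := E) (y := y) hchain.2.1 1 (l + 1) le_rfl (by omega) le_rfl
      rw [hxv, hchain.1] at this; exact this
    have htrans' : ∀ {p q z}, moveBefore n β r s v p q → moveBefore n β r s v q z →
        moveBefore n β r s v p z := fun h1 h2 => hr'.1.1.trans _ _ _ h1 h2
    have hirr' : ∀ p, ¬ moveBefore n β r s v p p := fun p => hr'.1.1.irrefl p
    have e2 : moveBefore n β r s v (inr s) (inl v) :=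
      Or.inl ⟨rfl, by simp, Or.inl rfl⟩
    constructor
    · by_contra hlt
      push_neg at hlt
      have h1 : ¬ E (one t) s := fun he => absurd ((hone s).2 _ he) (not_le.mpr hlt)
      have hvs : v < one s := lt_of_le_of_lt (le_trans hvc (hcmin _ (hone t).1 h1)) hlt
      have e1 : moveBefore n β r s v (inl (one s)) (inr s) := hr'.1.2.1 _ _ (hone s).1
      have e3 : moveBefore n β r s v (inl v) (inl (one s)) := (hr'.2 _ _).2 hvs
      exact hirr' _ (htrans' (htrans' e1 e2) e3)
    · intro hp
      have hst' : moveBefore n β r s v (inr t) (inr s) := prec_sound k hk _ hr' _ _ hp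
      have ect : moveBefore n β r s v (inl c) (inr t) := hr'.1.2.1 _ _ hct
      have hsv : moveBefore n β r s v (inr s) (inr t) := by
        rcases eq_or_lt_of_le hvc with h | h
        · exact htrans' e2 (h ▸ ect)
        · exact htrans' e2 (htrans' ((hr'.2 _ _).2 h) ect)
      exact hirr' _ (htrans' hst' hsv)
  · rintro ⟨hone_le, hprec⟩
    classical
    obtain ⟨a0, ha0t, ha0s⟩ : ∃ i, E i t ∧ ¬ E i s := by
      have h := hN t s htns
      push_neg at h
      exact h
    set C : Finset (Fin n) := Finset.univ.filter (fun i => E i t ∧ ¬ E i s) with hC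
    have hCne : C.Nonempty := ⟨a0, by simp [hC, ha0t, ha0s]⟩
    set c := C.min' hCne with hc
    have hcmem : E c t ∧ ¬ E c s := by
      have := C.min'_mem hCne
      simpa [hC] using this
    have hcmin : ∀ i, E i t → ¬ E i s → c ≤ i := fun i h1 h2 =>
      C.min'_le i (by simp [hC, h1, h2])
    have hosc : one s < c :=
      lt_of_le_of_ne (le_trans hone_le ((hone t).2 _ hcmem.1))
        (fun h => hcmem.2 (h ▸ (hone s).1))
    have hksc : k s < c := by
      rcases lt_trichotomy c (k s) with h | h | h
      · exact absurd (Prec.TB hosc h (hone s).1 hcmem.2 hcmem.1) hprec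
      · exact absurd (h ▸ (hk s).1) hcmem.2
      · exact h
    -- descent along a chain: if some `y g ≺° s` and all previous x's exceed `k s`,
    -- then `t ≺° s`, contradiction.
    have hdesc : ∀ (l : ℕ) (x : ℕ → Fin n) (y : ℕ → β), x 1 = c →
        (∀ g : ℕ, 1 ≤ g → g ≤ l → E (x g) (y g) ∧ E (x (g + 1)) (y g) ∧ x (g + 1) < x g) →
        ∀ g : ℕ, 1 ≤ g → g ≤ l → (∀ g' : ℕ, 1 ≤ g' → g' ≤ g → k s < x g') →
        Prec n β E k (inr (y g)) (inr s) → False := by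
      intro l x y h1 h2 g
      induction g with
      | zero => intro hg1 _ _ _; omega
      | succ m ihm =>
        intro hg1 hg2 hgt hyp
        by_cases hm : m = 0
        · subst hm
          refine hprec (Prec.FB (t := x 1) hyp ?_ ?_ ?_)
          · rw [h1]; exact hksc
          · exact (h2 1 le_rfl hg2).1
          · rw [h1]; exact hcmem.1
        · have hm1 : 1 ≤ m := by omega
          have hnext : Prec n β E k (inr (y m)) (inr s) :=
            Prec.FB hyp (hgt (m + 1) (by omega) le_rfl)
              (h2 (m + 1) (by omega) hg2).1 (h2 m hm1 (by omega)).2.1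
          exact ihm hm1 (by omega) (fun g' a b => hgt g' a (by omega)) hnext
    -- every element of a chain from c exceeds k s
    have hgtks : ∀ (l : ℕ) (x : ℕ → Fin n) (y : ℕ → β), x 1 = c →
        (∀ g : ℕ, 1 ≤ g → g ≤ l → E (x g) (y g) ∧ E (x (g + 1)) (y g) ∧ x (g + 1) < x g) →
        (∀ g : ℕ, 1 ≤ g → g ≤ l + 1 → ¬ E (x g) s) →
        ∀ g : ℕ, 1 ≤ g → g ≤ l + 1 → k s < x g := by
      intro l x y h1 h2 h3 g
      induction g using Nat.strong_induction_on with
      | _ g ihg =>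
        intro hg1 hg2
        obtain ⟨m, rfl⟩ : ∃ m, g = m + 1 := ⟨g - 1, by omega⟩
        by_cases hm : m = 0
        · subst hm
          show k s < x 1
          rw [h1]; exact hksc
        · have hm1 : 1 ≤ m := by omega
          by_contra hcon
          have hne1 : x (m + 1) ≠ k s := fun h => h3 (m + 1) (by omega) (by omega) (h ▸ (hk s).1)
          have hlt : x (m + 1) < k s := lt_of_le_of_ne (not_lt.mp hcon) hne1
          have hkm : k s < x m := ihg m (by omega) hm1 (by omega)
          rcases lt_trichotomy (x (m + 1)) (one s) with hxo | hxo | hxo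
          · -- x (m+1) < one s : N(s) ⊆ N(y m), contradicting N-overlap
            have hym_ne_s : y m ≠ s := fun h => h3 m hm1 (by omega) (h ▸ (h2 m hm1 (by omega)).1)
            rcases (@trichotomous _ _ hSTO.toTrichotomous) (inr (y m)) (inr s) with hpos | hpos | hpos
            · refine absurd ?_ (hN s (y m) (Ne.symm hym_ne_s))
              intro a has
              by_contra hany
              exact hforb ⟨a, x (m + 1), y m, s,
                (hA _ _).2 (lt_of_lt_of_le hxo ((hone s).2 a has)),
                htrans ((hA a (x m)).2 (lt_of_le_of_lt ((hk s).2 a has) hkm))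
                  (hedge _ _ (h2 m hm1 (by omega)).1),
                hpos, (h2 m hm1 (by omega)).2.1, has, hany⟩
            · exact hym_ne_s (Sum.inr_injective hpos)
            · have hxmc : x m ≤ c := by
                have := altChain_anti (E := E) (y := y) h2 1 m le_rfl hm1 (by omega)
                rwa [h1] at this
              have hxm_t : r (inl (x m)) (inr t) := by
                rcases eq_or_lt_of_le (le_trans hxmc ((hk t).2 c hcmem.1)) with h | h
                · exact h ▸ hedge _ _ (hk t).1
                · exact htrans ((hA _ _).2 h) (hedge _ _ (hk t).1)
              exact hforb ⟨x m, one s, s, y m,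
                (hA _ _).2 (lt_of_le_of_lt ((hone s).2 (k s) (hk s).1) hkm),
                htrans hxm_t hts, hpos, (hone s).1,
                (h2 m hm1 (by omega)).1, h3 m hm1 (by omega)⟩
          · exact h3 (m + 1) (by omega) (by omega) (hxo ▸ (hone s).1)
          · have hPy : Prec n β E k (inr (y m)) (inr s) :=
              Prec.TB hxo hlt (hone s).1 (h3 (m + 1) (by omega) (by omega))
                (h2 m hm1 (by omega)).2.1
            exact hdesc l x y h1 h2 m hm1 (by omega)
              (fun g' a b => ihg g' (by omega) a (by omega)) hPy
    -- construct the limit v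
    obtain ⟨l0, x0, y0, hch0, hle0⟩ := exists_maximal_chain (E := E) s c n 0
      (fun _ => c) (fun _ => t) (le_of_lt c.isLt) rfl
      (fun g hg1 hg2 => absurd hg2 (by omega)) (fun g _ _ => hcmem.2)
    set S : Finset (Fin n) := Finset.univ.filter
      (fun a => ∃ (l : ℕ) (x : ℕ → Fin n) (y : ℕ → β),
        IsAltChain n β E s c l x y ∧ x (l + 1) = a) with hS
    have hSne : S.Nonempty := ⟨x0 (l0 + 1),
      by simp only [hS, Finset.mem_filter, Finset.mem_univ, true_and]
         exact ⟨l0, x0, y0, hch0, rfl⟩⟩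
    obtain ⟨v, hveq⟩ : ∃ w : Fin n, w = S.min' hSne := ⟨_, rfl⟩
    have hvmem : ∃ (l : ℕ) (x : ℕ → Fin n) (y : ℕ → β),
        IsAltChain n β E s c l x y ∧ x (l + 1) = v := by
      have := S.min'_mem hSne
      rw [← hveq] at this
      simpa only [hS, Finset.mem_filter, Finset.mem_univ, true_and] using this
    obtain ⟨lv, xv, yv, hchv, hxvv⟩ := hvmem
    have hvmin : ∀ (l : ℕ) (x : ℕ → Fin n) (y : ℕ → β),
        IsAltChain n β E s c l x y → v ≤ x (l + 1) := by
      intro l x y hch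
      rw [hveq]
      refine S.min'_le _ ?_
      simp only [hS, Finset.mem_filter, Finset.mem_univ, true_and]
      exact ⟨l, x, y, hch, rfl⟩
    have hlim : IsLimit n β E t s v := ⟨c, ⟨hcmem.1, hcmem.2, hcmin⟩,
      ⟨lv, xv, yv, hchv, hxvv⟩, hvmin⟩
    have hvks : k s < v := by
      have := hgtks lv xv yv hchv.1 hchv.2.1 hchv.2.2.1 (lv + 1) (by omega) le_rfl
      rwa [hxvv] at this
    have hvc : v ≤ c := by
      have := altChain_anti (E := E) (y := yv) hchv.2.1 1 (lv + 1) le_rfl (by omega) le_rfl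
      rw [hxvv, hchv.1] at this; exact this
    have hvxg : ∀ g : ℕ, 1 ≤ g → g ≤ lv + 1 → v ≤ xv g := by
      intro g hg1 hg2
      have := altChain_anti (E := E) (y := yv) hchv.2.1 g (lv + 1) hg1 hg2 le_rfl
      rwa [hxvv] at this
    have hNslt : ∀ a : Fin n, E a s → a < v := fun a ha =>
      lt_of_le_of_lt ((hk s).2 a ha) hvks
    have hrvt : r (inl v) (inr t) := by
      rcases eq_or_lt_of_le (le_trans hvc ((hk t).2 c hcmem.1)) with h | h
      · exact h ▸ hedge _ _ (hk t).1
      · exact htrans ((hA _ _).2 h) (hedge _ _ (hk t).1)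
    have hrvs : r (inl v) (inr s) := htrans hrvt hts
    -- the key invariant P3
    have hP3 : ∀ (b : β) (a : Fin n), r (inl v) (inr b) → r (inr b) (inr s) →
        E a b → a < v → E a s := by
      intro b a hvb hbs hab hav
      by_contra hans
      set T : Finset ℕ := (Finset.range (lv + 2)).filter
        (fun g => 1 ≤ g ∧ r (inl (xv g)) (inr b)) with hT
      have hTne : T.Nonempty := ⟨lv + 1, by
        simp only [hT, Finset.mem_filter, Finset.mem_range]
        exact ⟨by omega, by omega, by rw [hxvv]; exact hvb⟩⟩
      obtain ⟨g0, hg0eq⟩ : ∃ w : ℕ, w = T.min' hTne := ⟨_, rfl⟩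
      have hg0mem : g0 < lv + 2 ∧ 1 ≤ g0 ∧ r (inl (xv g0)) (inr b) := by
        have := T.min'_mem hTne
        rw [← hg0eq] at this
        simpa only [hT, Finset.mem_filter, Finset.mem_range] using this
      obtain ⟨hg0lt, hg01, hg0b⟩ := hg0mem
      have hg0min : ∀ g, g < lv + 2 → 1 ≤ g → r (inl (xv g)) (inr b) → g0 ≤ g := by
        intro g a1 a2 a3
        rw [hg0eq]
        refine T.min'_le g ?_
        simp only [hT, Finset.mem_filter, Finset.mem_range]
        exact ⟨a1, a2, a3⟩
      by_cases hEg0 : E (xv g0) b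
      · -- splice a shorter chain through b, contradicting minimality of v
        have hvg0 : v ≤ xv g0 := hvxg g0 hg01 (by omega)
        set x' : ℕ → Fin n := Function.update xv (g0 + 1) a with hx'
        set y' : ℕ → β := Function.update yv g0 b with hy'
        have hx'v : ∀ g : ℕ, g ≠ g0 + 1 → x' g = xv g := fun g hg =>
          Function.update_of_ne hg _ _
        have hx'l : x' (g0 + 1) = a := Function.update_self _ _ _
        have hy'v : ∀ g : ℕ, g ≠ g0 → y' g = yv g := fun g hg => Function.update_of_ne hg _ _
        have hy'l : y' g0 = b := Function.update_self _ _ _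
        obtain ⟨l', x'', y'', hch, hle⟩ := exists_maximal_chain (E := E) s c n g0 x' y'
          (by rw [hx'l]; exact le_of_lt a.isLt)
          (by rw [hx'v 1 (by omega)]; exact hchv.1)
          (by intro g hg1 hg2
              rcases Nat.lt_or_ge g g0 with hg | hg
              · rw [hx'v g (by omega), hx'v (g + 1) (by omega), hy'v g (by omega)]
                exact hchv.2.1 g hg1 (by omega)
              · have hgeq : g = g0 := by omega
                subst hgeq
                rw [hx'v g (by omega), hy'l, hx'l]
                exact ⟨hEg0, hab, lt_of_lt_of_le hav hvg0⟩)
          (by intro g hg1 hg2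
              rcases Nat.lt_or_ge g (g0 + 1) with hg | hg
              · rw [hx'v g (by omega)]
                exact hchv.2.2.1 g hg1 (by omega)
              · have hgeq : g = g0 + 1 := by omega
                subst hgeq; rw [hx'l]; exact hans)
        have hva := hvmin l' x'' y'' hch
        rw [hx'l] at hle
        exact absurd (lt_of_le_of_lt (le_trans hva hle) hav) (lt_irrefl v)
      · by_cases hbt : b = t
        · subst hbt
          exact absurd (lt_of_lt_of_le hav (le_trans hvc (hcmin a hab hans))) (lt_irrefl a)
        · by_cases hg1' : g0 = 1
          · have hcb : r (inl c) (inr b) := by rw [← hchv.1, ← hg1']; exact hg0b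
            have hncb : ¬ E c b := by rw [← hchv.1, ← hg1']; exact hEg0
            have hbt' : r (inr b) (inr t) := by
              rcases (@trichotomous _ _ hSTO.toTrichotomous) (inr b) (inr t) with h | h | h
              · exact h
              · exact absurd (Sum.inr_injective h) hbt
              · exact absurd ⟨b, h, hbs⟩ hconsec
            exact hforb ⟨c, a, b, t, (hA _ _).2 (lt_of_lt_of_le hav hvc),
              hcb, hbt', hab, hcmem.1, hncb⟩
          · have hg02 : 2 ≤ g0 := by omega
            have hprev : r (inr b) (inl (xv (g0 - 1))) := by
              rcases (@trichotomous _ _ hSTO.toTrichotomous) (inl (xv (g0 - 1))) (inr b) with h | h | h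
              · exact absurd (hg0min (g0 - 1) (by omega) (by omega) h) (by omega)
              · exact absurd h (by simp)
              · exact h
            have hidx : g0 - 1 + 1 = g0 := by omega
            have hc2 := hchv.2.1 (g0 - 1) (by omega) (by omega)
            exact hforb ⟨xv g0, a, b, yv (g0 - 1),
              (hA _ _).2 (lt_of_lt_of_le hav (hvxg g0 hg01 (by omega))),
              hg0b, htrans hprev (hedge _ _ hc2.1), hab,
              hidx ▸ hc2.2.1, hEg0⟩
    have hasym : ∀ {x y : Fin n ⊕ β}, r x y → ¬ r y x := fun hxy hyx => hirr _ (htrans hxy hyx)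
    have hstick' : IsAStickOrder n β E (moveBefore n β r s v) := by
      refine ⟨⟨moveBefore_sto hSTO s v, ?_, ?_⟩, ?_⟩
      · intro a b hab
        by_cases hbs : b = s
        · subst hbs
          exact Or.inr (Or.inl ⟨by simp, rfl, (hA _ _).2 (hNslt a hab)⟩)
        · exact Or.inr (Or.inr ⟨by simp, by simp [hbs], hedge a b hab⟩)
      · rintro ⟨a, a', b, b', h1, h2, h3, e1, e2, e3⟩
        have h1r : r (inl a') (inl a) := by
          rcases h1 with ⟨h, _, _⟩ | ⟨_, h, _⟩ | ⟨_, _, h⟩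
          · exact absurd h (by simp)
          · exact absurd h (by simp)
          · exact h
        by_cases hbs : b = s
        · rw [hbs] at h2 h3 e1 e3
          have h2r : r (inl a) (inl v) := by
            rcases h2 with ⟨h, _, _⟩ | ⟨_, _, h⟩ | ⟨_, h, _⟩
            · exact absurd h (by simp)
            · exact h
            · exact absurd rfl h
          have hav : a < v := (hA _ _).1 h2r
          have h3r : r (inl v) (inr b') ∧ b' ≠ s := by
            rcases h3 with ⟨_, hy, h⟩ | ⟨hx, _, _⟩ | ⟨hx, _, _⟩
            · rcases h with h | h
              · exact absurd h (by simp)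
              · exact ⟨h, fun hc => hy (by rw [hc])⟩
            · exact absurd rfl hx
            · exact absurd rfl hx
          rcases (@trichotomous _ _ hSTO.toTrichotomous) (inr b') (inr s) with hp | hp | hp
          · exact e3 (hP3 b' a h3r.1 hp e2 hav)
          · exact h3r.2 (Sum.inr_injective hp)
          · exact hforb ⟨a, a', s, b', h1r, htrans ((hA _ _).2 hav) hrvs, hp, e1, e2, e3⟩
        · have h2r : r (inl a) (inr b) := by
            rcases h2 with ⟨h, _, _⟩ | ⟨_, h, _⟩ | ⟨_, _, h⟩
            · exact absurd h (by simp)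
            · exact absurd (Sum.inr_injective h) hbs
            · exact h
          by_cases hb's : b' = s
          · rw [hb's] at h3 e2
            have h3r : r (inr b) (inl v) := by
              rcases h3 with ⟨h, _, _⟩ | ⟨_, _, h⟩ | ⟨_, h, _⟩
              · exact absurd (Sum.inr_injective h) hbs
              · exact h
              · exact absurd rfl h
            exact hforb ⟨a, a', b, s, h1r, h2r, htrans h3r hrvs, e1, e2, e3⟩
          · have h3r : r (inr b) (inr b') := by
              rcases h3 with ⟨h, _, _⟩ | ⟨_, h, _⟩ | ⟨_, _, h⟩
              · exact absurd (Sum.inr_injective h) hbs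
              · exact absurd (Sum.inr_injective h) hb's
              · exact h
            exact hforb ⟨a, a', b, b', h1r, h2r, h3r, e1, e2, e3⟩
      · intro i j
        constructor
        · rintro (⟨h, _, _⟩ | ⟨_, h, _⟩ | ⟨_, _, h⟩)
          · exact absurd h (by simp)
          · exact absurd h (by simp)
          · exact (hA i j).1 h
        · intro h
          exact Or.inr (Or.inr ⟨by simp, by simp, (hA i j).2 h⟩)
    -- rank machinery
    have hmono : ∀ (ρ : (Fin n ⊕ β) → (Fin n ⊕ β) → Prop), IsStrictTotalOrder (Fin n ⊕ β) ρ →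
        ∀ u w, ρ u w → rankOf n β ρ u < rankOf n β ρ w := by
      intro ρ hρ u w huw
      have hsub : {z | ρ z u} ⊆ {z | ρ z w} := fun z hz => hρ.trans _ _ _ hz huw
      have hss : {z | ρ z u} ⊂ {z | ρ z w} :=
        (Set.ssubset_iff_of_subset hsub).mpr ⟨u, huw, fun hu => hρ.irrefl u hu⟩
      exact Set.ncard_lt_ncard hss (Set.toFinite _)
    have hrk_lt : ∀ w, r w (inl v) →
        rankOf n β (moveBefore n β r s v) w = rankOf n β r w := by
      intro w hw
      have hwns : w ≠ inr s := fun h => hasym hrvs (h ▸ hw)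
      unfold rankOf
      congr 1
      ext z
      simp only [Set.mem_setOf_eq]
      constructor
      · rintro (⟨hz, _, hor⟩ | ⟨_, h, _⟩ | ⟨_, _, h⟩)
        · exfalso
          rcases hor with h | h
          · exact hirr _ (h ▸ hw)
          · exact hasym hw h
        · exact absurd h hwns
        · exact h
      · intro hz
        by_cases hzs : z = inr s
        · exact absurd (htrans (hzs ▸ hz) hw) (hasym hrvs)
        · exact Or.inr (Or.inr ⟨hzs, hwns, hz⟩)
    have hrk_in : ∀ w, (w = inl v ∨ r (inl v) w) → r w (inr s) →
        rankOf n β (moveBefore n β r s v) w = rankOf n β r w + 1 := by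
      intro w hvor hws
      have hwns : w ≠ inr s := fun h => hirr _ (h ▸ hws)
      have hset : {z | moveBefore n β r s v z w} = insert (inr s) {z | r z w} := by
        ext z
        simp only [Set.mem_setOf_eq, Set.mem_insert_iff]
        constructor
        · rintro (⟨hz, _, _⟩ | ⟨_, h, _⟩ | ⟨_, _, h⟩)
          · exact Or.inl hz
          · exact absurd h hwns
          · exact Or.inr h
        · rintro (rfl | hz)
          · exact Or.inl ⟨rfl, hwns, hvor⟩
          · by_cases hzs : z = inr s
            · exact absurd (hzs ▸ hz) (hasym hws)
            · exact Or.inr (Or.inr ⟨hzs, hwns, hz⟩)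
      have hnm : (inr s : Fin n ⊕ β) ∉ {z | r z w} := fun h => hasym hws h
      unfold rankOf
      rw [hset, Set.ncard_insert_of_notMem hnm (Set.toFinite _)]
    have hrk_gt : ∀ w, r (inr s) w →
        rankOf n β (moveBefore n β r s v) w = rankOf n β r w := by
      intro w hsw
      have hwns : w ≠ inr s := fun h => hirr _ (h ▸ hsw)
      unfold rankOf
      congr 1
      ext z
      simp only [Set.mem_setOf_eq]
      constructor
      · rintro (⟨hz, _, _⟩ | ⟨_, h, _⟩ | ⟨_, _, h⟩)
        · exact hz ▸ hsw
        · exact absurd h hwns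
        · exact h
      · intro hz
        by_cases hzs : z = inr s
        · exact Or.inl ⟨hzs, hwns, Or.inr (htrans hrvs hsw)⟩
        · exact Or.inr (Or.inr ⟨hzs, hwns, hz⟩)
    have hrk_s : rankOf n β (moveBefore n β r s v) (inr s) = rankOf n β r (inl v) := by
      unfold rankOf
      congr 1
      ext z
      simp only [Set.mem_setOf_eq]
      constructor
      · rintro (⟨_, h, _⟩ | ⟨_, _, h⟩ | ⟨_, h, _⟩)
        · exact absurd rfl h
        · exact h
        · exact absurd rfl h
      · intro hz
        have hzs : z ≠ inr s := fun h => hasym hrvs (h ▸ hz)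
        exact Or.inr (Or.inl ⟨hzs, rfl, hz⟩)
    have hcases : ∀ w, w ≠ inr s →
        (r w (inl v) ∨ ((w = inl v ∨ r (inl v) w) ∧ r w (inr s)) ∨ r (inr s) w) := by
      intro w hw
      rcases (@trichotomous _ _ hSTO.toTrichotomous) w (inl v) with h | h | h
      · exact Or.inl h
      · exact Or.inr (Or.inl ⟨Or.inl h, h ▸ hrvs⟩)
      · rcases (@trichotomous _ _ hSTO.toTrichotomous) w (inr s) with h2 | h2 | h2
        · exact Or.inr (Or.inl ⟨Or.inr h, h2⟩)
        · exact absurd h2 hw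
        · exact Or.inr (Or.inr h2)
    have hrk_le : ∀ w, w ≠ inr s →
        rankOf n β r w ≤ rankOf n β (moveBefore n β r s v) w ∧
        rankOf n β (moveBefore n β r s v) w ≤ rankOf n β r w + 1 := by
      intro w hw
      rcases hcases w hw with h | ⟨h1, h2⟩ | h
      · rw [hrk_lt w h]; omega
      · rw [hrk_in w h1 h2]; omega
      · rw [hrk_gt w h]; omega
    have hrk_split : rankOf n β r (inr s) = rankOf n β r (inl v) +
        {w | (w = inl v ∨ r (inl v) w) ∧ r w (inr s)}.ncard := by
      have hsplit : {z | r z (inr s)} =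
          {z | r z (inl v)} ∪ {w | (w = inl v ∨ r (inl v) w) ∧ r w (inr s)} := by
        ext z
        simp only [Set.mem_setOf_eq, Set.mem_union]
        constructor
        · intro hz
          rcases (@trichotomous _ _ hSTO.toTrichotomous) z (inl v) with h | h | h
          · exact Or.inl h
          · exact Or.inr ⟨Or.inl h, hz⟩
          · exact Or.inr ⟨Or.inr h, hz⟩
        · rintro (h | ⟨_, h2⟩)
          · exact htrans h hrvs
          · exact h2
      have hdisj : Disjoint {z | r z (inl v)}
          {w | (w = inl v ∨ r (inl v) w) ∧ r w (inr s)} := by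
        rw [Set.disjoint_left]
        intro z hz hzW
        rcases hzW.1 with h | h
        · exact hirr _ (h ▸ hz)
        · exact hasym hz h
      show rankOf n β r (inr s) = _
      unfold rankOf
      rw [hsplit, Set.ncard_union_eq hdisj (Set.toFinite _) (Set.toFinite _)]
    set D : Finset β := Finset.univ.filter
      (fun b => r (inl v) (inr b) ∧ r (inr b) (inr s)) with hD
    have claim_b : ∀ b : β, b ≠ s →
        rankOf n β (moveBefore n β r s v) (inr b)
            - rankOf n β (moveBefore n β r s v) (inl (one b)) ≤
          (rankOf n β r (inr b) - rankOf n β r (inl (one b)))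
            + (if b ∈ D then 1 else 0) := by
      intro b hbs
      have honb : r (inl (one b)) (inr b) := hedge _ _ (hone b).1
      have honns : (inl (one b) : Fin n ⊕ β) ≠ inr s := by simp
      rcases hcases (inr b) (by simp [hbs]) with h | ⟨h1, h2⟩ | h
      · rw [hrk_lt _ h, hrk_lt _ (htrans honb h)]
        exact Nat.le_add_right _ _
      · have hvb : r (inl v) (inr b) := by
          rcases h1 with h1 | h1
          · exact absurd h1 (by simp)
          · exact h1
        have hmem : b ∈ D := by simp [hD, hvb, h2]
        rw [hrk_in _ h1 h2, if_pos hmem]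
        have := hrk_le (inl (one b)) honns
        omega
      · rw [hrk_gt _ h]
        have := hrk_le (inl (one b)) honns
        omega
    have claim_s :
        rankOf n β (moveBefore n β r s v) (inr s)
            - rankOf n β (moveBefore n β r s v) (inl (one s)) + D.card + 1 ≤
          rankOf n β r (inr s) - rankOf n β r (inl (one s)) := by
      have hosv : r (inl (one s)) (inl v) := (hA _ _).2 (hNslt _ (hone s).1)
      have h2 : rankOf n β (moveBefore n β r s v) (inl (one s))
          = rankOf n β r (inl (one s)) := hrk_lt _ hosv
      have h5 : rankOf n β r (inl (one s)) < rankOf n β r (inl v) := hmono r hSTO _ _ hosv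
      have h4 : D.card + 1 ≤ {w | (w = inl v ∨ r (inl v) w) ∧ r w (inr s)}.ncard := by
        have hsub : insert (inl v : Fin n ⊕ β) (Sum.inr '' (D : Set β)) ⊆
            {w | (w = inl v ∨ r (inl v) w) ∧ r w (inr s)} := by
          rintro z (rfl | ⟨b, hb, rfl⟩)
          · exact ⟨Or.inl rfl, hrvs⟩
          · have hb' : r (inl v) (inr b) ∧ r (inr b) (inr s) := by
              simpa [hD] using hb
            exact ⟨Or.inr hb'.1, hb'.2⟩
        have hcard : (insert (inl v : Fin n ⊕ β) (Sum.inr '' (D : Set β))).ncard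
            = D.card + 1 := by
          rw [Set.ncard_insert_of_notMem (by simp) (Set.toFinite _),
            Set.ncard_image_of_injective _ Sum.inr_injective, Set.ncard_coe_finset]
        rw [← hcard]
        exact Set.ncard_le_ncard hsub (Set.toFinite _)
      rw [hrk_s, h2]
      omega
    have claim_a : ∀ a : Fin n,
        (Finset.univ.filter (fun b : β => E a b)).sup
            (fun b => rankOf n β (moveBefore n β r s v) (inr b))
          - rankOf n β (moveBefore n β r s v) (inl a) ≤
        (Finset.univ.filter (fun b : β => E a b)).sup
            (fun b => rankOf n β r (inr b))
          - rankOf n β r (inl a) := by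
      intro a
      obtain ⟨b0, hb0⟩ := hnoiso a
      have hb0F : b0 ∈ Finset.univ.filter (fun b : β => E a b) := by simp [hb0]
      have hsup_ge : rankOf n β r (inl a) ≤
          (Finset.univ.filter (fun b : β => E a b)).sup (fun b => rankOf n β r (inr b)) :=
        le_trans (le_of_lt (hmono r hSTO _ _ (hedge a b0 hb0)))
          (Finset.le_sup (f := fun b => rankOf n β r (inr b)) hb0F)
      rcases hcases (inl a) (by simp) with h | ⟨h1, h2⟩ | h
      · have hav : a < v := (hA _ _).1 h
        rw [hrk_lt _ h]
        refine Nat.sub_le_sub_right (Finset.sup_le ?_) _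
        intro b hbF
        have hEab : E a b := by simpa using hbF
        by_cases hbs2 : b = s
        · rw [hbs2, hrk_s]
          have hsF : s ∈ Finset.univ.filter (fun b : β => E a b) := by
            simp [hbs2 ▸ hEab]
          exact le_trans (le_of_lt (hmono r hSTO _ _ hrvs))
            (Finset.le_sup (f := fun b => rankOf n β r (inr b)) hsF)
        · rcases hcases (inr b) (by simp [hbs2]) with hb | ⟨hb1, hb2⟩ | hb
          · rw [hrk_lt _ hb]
            exact Finset.le_sup (f := fun b => rankOf n β r (inr b)) hbF
          · have hvb : r (inl v) (inr b) := by
              rcases hb1 with h' | h'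
              · exact absurd h' (by simp)
              · exact h'
            have hEas : E a s := hP3 b a hvb hb2 hEab hav
            have hsF : s ∈ Finset.univ.filter (fun b : β => E a b) := by simp [hEas]
            rw [hrk_in _ hb1 hb2]
            have hlt2 : rankOf n β r (inr b) < rankOf n β r (inr s) := hmono r hSTO _ _ hb2
            have hle2 : rankOf n β r (inr s) ≤
                (Finset.univ.filter (fun b : β => E a b)).sup
                  (fun b => rankOf n β r (inr b)) :=
              Finset.le_sup (f := fun b => rankOf n β r (inr b)) hsF
            omega
          · rw [hrk_gt _ hb]
            exact Finset.le_sup (f := fun b => rankOf n β r (inr b)) hbF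
      · have hvlea : v ≤ a := by
          rcases h1 with h' | h'
          · exact (Sum.inl_injective h').ge
          · exact le_of_lt ((hA _ _).1 h')
        rw [hrk_in _ h1 h2]
        have hsup' : (Finset.univ.filter (fun b : β => E a b)).sup
            (fun b => rankOf n β (moveBefore n β r s v) (inr b)) ≤
            (Finset.univ.filter (fun b : β => E a b)).sup
              (fun b => rankOf n β r (inr b)) + 1 := by
          refine Finset.sup_le ?_
          intro b hbF
          have hEab : E a b := by simpa using hbF
          have hbns : b ≠ s := fun hc => absurd (hNslt a (hc ▸ hEab)) (not_lt.mpr hvlea)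
          exact le_trans (hrk_le (inr b) (by simp [hbns])).2
            (Nat.add_le_add_right (Finset.le_sup (f := fun b => rankOf n β r (inr b)) hbF) 1)
        omega
      · rw [hrk_gt _ h]
        refine Nat.sub_le_sub_right (Finset.sup_le ?_) _
        intro b hbF
        have hEab : E a b := by simpa using hbF
        rw [hrk_gt _ (htrans h (hedge a b hEab))]
        exact Finset.le_sup (f := fun b => rankOf n β r (inr b)) hbF
    have hDsub : D ⊆ Finset.univ.erase s := by
      intro b hb
      have hb' : r (inr b) (inr s) := (Finset.mem_filter.mp hb).2.2
      exact Finset.mem_erase.mpr ⟨fun hc => hirr _ (hc ▸ hb'), Finset.mem_univ b⟩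
    have hsumB : (∑ b : β, (rankOf n β (moveBefore n β r s v) (inr b)
          - rankOf n β (moveBefore n β r s v) (inl (one b)))) + 1 ≤
        ∑ b : β, (rankOf n β r (inr b) - rankOf n β r (inl (one b))) := by
      rw [← Finset.sum_erase_add Finset.univ _ (Finset.mem_univ s),
        ← Finset.sum_erase_add Finset.univ
          (fun b => rankOf n β r (inr b) - rankOf n β r (inl (one b))) (Finset.mem_univ s)]
      have h1 : ∑ b ∈ Finset.univ.erase s,
          (rankOf n β (moveBefore n β r s v) (inr b)
            - rankOf n β (moveBefore n β r s v) (inl (one b))) ≤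
          ∑ b ∈ Finset.univ.erase s, ((rankOf n β r (inr b) - rankOf n β r (inl (one b)))
            + (if b ∈ D then 1 else 0)) :=
        Finset.sum_le_sum (fun b hb => claim_b b (Finset.ne_of_mem_erase hb))
      rw [Finset.sum_add_distrib] at h1
      have h3 : (∑ b ∈ Finset.univ.erase s, (if b ∈ D then (1 : ℕ) else 0)) = D.card := by
        rw [Finset.sum_ite_mem, Finset.inter_eq_right.mpr hDsub]
        exact (Finset.card_eq_sum_ones D).symm
      rw [h3] at h1
      omega
    have hsumA : (∑ a : Fin n, ((Finset.univ.filter (fun b : β => E a b)).sup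
          (fun b => rankOf n β (moveBefore n β r s v) (inr b))
          - rankOf n β (moveBefore n β r s v) (inl a))) ≤
        ∑ a : Fin n, ((Finset.univ.filter (fun b : β => E a b)).sup
          (fun b => rankOf n β r (inr b)) - rankOf n β r (inl a)) :=
      Finset.sum_le_sum (fun a _ => claim_a a)
    have hlen : lengthOf n β E one (moveBefore n β r s v) < lengthOf n β E one r := by
      unfold lengthOf
      omega
    exact ⟨v, hlim, hstick', hlen⟩
end
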